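/- arXiv:0907.1336 — 3 statements merged into one kernel-verified Lean document; each statement's English description precedes it below -/
import Mathlib

section
/- Let k and ℓ be positive integers. Every increasing subset of Γ(k,ℓ) is of the form A_{(c,I,J)} for some 0 ≤ c ≤ k and subsets I, J ⊆ {1,…,ℓ} with |I| ≤ k − c. Consequently, every increasing subset of Γ̃(k,ℓ) is of the form A_{(c,I,J)} ∪ Z for some such c, I, J and some Z ⊆ F_ℓ. -/
open MvPolynomial TensorProduct
open scoped Classical

noncomputable section

namespace Pieri

/-! ### Young diagrams and skew Kostka numbers.

A Young diagram is encoded as a finitely supported function `D : ℕ →₀ ℕ`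
(0-indexed: `D i` is the length of row `i+1`), weakly decreasing. -/

def IsYoung (D : ℕ →₀ ℕ) : Prop := ∀ i, D (i + 1) ≤ D i

/-- `|D|`, the number of boxes. -/
def ysize (D : ℕ →₀ ℕ) : ℕ := D.sum fun _ e => e

/-- `Interlaces A B` : `A ⊒ B`, i.e. `a_j ≥ b_j ≥ a_{j+1}` for all `j`. -/
def Interlaces (A B : ℕ →₀ ℕ) : Prop := ∀ j, B j ≤ A j ∧ A (j + 1) ≤ B j

/-- Semistandard skew tableau of shape `F/E` with entries in `{1,…,m}` and content `M`.
The filling `T` is normalized to be `0` outside the boxes of `F/E`. -/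
def IsSkewSSYT (E F : ℕ →₀ ℕ) (m : ℕ) (M : Fin m → ℕ) (T : ℕ × ℕ → ℕ) : Prop :=
  (∀ i, E i ≤ F i) ∧
  (∀ i j, E i ≤ j → j < F i → 1 ≤ T (i, j) ∧ T (i, j) ≤ m) ∧
  (∀ i j, ¬(E i ≤ j ∧ j < F i) → T (i, j) = 0) ∧
  (∀ i j, E i ≤ j → j + 1 < F i → T (i, j) ≤ T (i, j + 1)) ∧
  (∀ i j, E i ≤ j → j < F i → E (i + 1) ≤ j → j < F (i + 1) → T (i, j) < T (i + 1, j)) ∧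
  (∀ r : Fin m, Set.ncard {c : ℕ × ℕ | E c.1 ≤ c.2 ∧ c.2 < F c.1 ∧ T c = (r : ℕ) + 1} = M r)

/-- The skew Kostka number `K_{F/E, M}`. -/
def kostka (E F : ℕ →₀ ℕ) (m : ℕ) (M : Fin m → ℕ) : ℕ :=
  Set.ncard {T : ℕ × ℕ → ℕ | IsSkewSSYT E F m M T}

/-! ### The posets `Γ(k,ℓ)` and `Γ̃(k,ℓ)` and the lattice cone `Ω(k,ℓ)`. -/

/-- Ambient type containing `Γ̃(k,ℓ)`: `Sum.inl (i,j)` encodes `γ_j^(i)`,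
`Sum.inr (s,t)` encodes `ε_{s,t}`. -/
abbrev GammaAmb : Type := (ℤ × ℕ) ⊕ (ℕ × ℕ)

def gammaSet (k l : ℕ) : Set (ℤ × ℕ) :=
  {p | -(l : ℤ) ≤ p.1 ∧ p.1 ≤ (l : ℤ) ∧ 1 ≤ p.2 ∧ (p.2 : ℤ) ≤ (k : ℤ) + max 0 p.1}

def epsSet (l : ℕ) : Set (ℕ × ℕ) := {p | 1 ≤ p.1 ∧ p.1 < p.2 ∧ p.2 ≤ l}

def gammaTildeSet (k l : ℕ) : Set GammaAmb :=
  Sum.inl '' gammaSet k l ∪ Sum.inr '' epsSet l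

/-- One-step generating relations of the partial order of `Γ(k,ℓ)`:
`gammaStep k l a b` means "`a ≥ b`" is one of the defining relations. -/
def gammaStep (k l : ℕ) : ℤ × ℕ → ℤ × ℕ → Prop := fun a b =>
  (∃ i j : ℕ, i < l ∧ 1 ≤ j ∧ j ≤ k + i ∧ a = ((i : ℤ) + 1, j) ∧ b = ((i : ℤ), j)) ∨
  (∃ i j : ℕ, i < l ∧ 1 ≤ j ∧ j ≤ k + i ∧ a = ((i : ℤ), j) ∧ b = ((i : ℤ) + 1, j + 1)) ∨
  (∃ i j : ℕ, i < l ∧ 1 ≤ j ∧ j ≤ k ∧ a = (-(i : ℤ) - 1, j) ∧ b = (-(i : ℤ), j)) ∨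
  (∃ i j : ℕ, i < l ∧ 1 ≤ j ∧ j + 1 ≤ k ∧ a = (-(i : ℤ), j) ∧ b = (-(i : ℤ) - 1, j + 1))

/-- `gammaGE k l a b` : `a ≥ b` in the partial order of `Γ(k,ℓ)` generated by the relations. -/
def gammaGE (k l : ℕ) : ℤ × ℕ → ℤ × ℕ → Prop := Relation.ReflTransGen (gammaStep k l)

/-- `tildeGE k l a b` : `a ≥ b` in `Γ̃(k,ℓ)`; each `ε_{s,t}` is comparable only with itself. -/
def tildeGE (k l : ℕ) : GammaAmb → GammaAmb → Prop := fun a b =>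
  (∃ p q, a = Sum.inl p ∧ b = Sum.inl q ∧ gammaGE k l p q) ∨ a = b

/-- `Ω(k,ℓ)`, the additive monoid of order-preserving functions `Γ̃(k,ℓ) → ℤ_{≥0}`,
encoded as functions on the ambient type vanishing outside `Γ̃(k,ℓ)`. -/
def OmegaM (k l : ℕ) : AddSubmonoid (GammaAmb → ℕ) where
  carrier := {f | (∀ a b, tildeGE k l a b → f b ≤ f a) ∧
    ∀ p, p ∉ gammaTildeSet k l → f p = 0}
  add_mem' := by
    rintro f g ⟨hf1, hf2⟩ ⟨hg1, hg2⟩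
    refine ⟨fun a b h => add_le_add (hf1 a b h) (hg1 a b h), fun p hp => ?_⟩
    simp [Pi.add_apply, hf2 p hp, hg2 p hp]
  zero_mem' := ⟨fun _ _ _ => le_rfl, fun _ _ => rfl⟩

def Omega (k l : ℕ) : Set (GammaAmb → ℕ) := OmegaM k l

/-- `f_{i,j}` as an integer. -/
def fval (f : GammaAmb → ℕ) (i : ℤ) (j : ℕ) : ℤ := (f (Sum.inl (i, j)) : ℤ)

/-- `A_j(f)`. -/
def Afun (k : ℕ) (f : GammaAmb → ℕ) (j : ℕ) : ℤ :=
  (∑ a ∈ Finset.Icc 1 (k + j), fval f (j : ℤ) a)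
    - ∑ b ∈ Finset.Icc 1 (k + j - 1), fval f ((j : ℤ) - 1) b

/-- `B_j(f)`. -/
def Bfun (k : ℕ) (f : GammaAmb → ℕ) (j : ℕ) : ℤ :=
  ∑ a ∈ Finset.Icc 1 k, (fval f (-(j : ℤ)) a - fval f (-(j : ℤ) + 1) a)

/-- `P_j(f)`. -/
def Pfun (k l : ℕ) (f : GammaAmb → ℕ) (j : ℕ) : ℤ :=
  Afun k f j + Bfun k f j + (∑ a ∈ Finset.Ico 1 j, (f (Sum.inr (a, j)) : ℤ))
    + ∑ b ∈ Finset.Icc (j + 1) l, (f (Sum.inr (j, b)) : ℤ)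

/-- `Ω_{F,D,P}` : the elements `f ∈ Ω(k,ℓ)` with `f_{-ℓ} = D`, `f_ℓ = F` and `P(f) = P`. -/
def OmegaFDP (k l : ℕ) (D F : ℕ →₀ ℕ) (P : Fin l → ℕ) : Set (GammaAmb → ℕ) :=
  {f ∈ Omega k l |
    (∀ a : ℕ, 1 ≤ a → a ≤ k → f (Sum.inl (-(l : ℤ), a)) = D (a - 1)) ∧
    (∀ a : ℕ, 1 ≤ a → a ≤ k + l → f (Sum.inl ((l : ℤ), a)) = F (a - 1)) ∧
    (∀ j : Fin l, Pfun k l f ((j : ℕ) + 1) = (P j : ℤ))}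

/-- `S(A,B,C)`. -/
def Scomb (l : ℕ) (A B : Fin l → ℕ) (C : ℕ × ℕ → ℕ) : Fin l → ℕ := fun i =>
  A i + B i + (∑ s ∈ Finset.Ico 1 ((i : ℕ) + 1), C (s, (i : ℕ) + 1))
    + ∑ t ∈ Finset.Icc ((i : ℕ) + 2) l, C ((i : ℕ) + 1, t)

/-! ### Increasing subsets -/

/-- The sequence `a_i` attached to `(c, I, J)`. -/
def aSeq (c : ℕ) (I J : Finset ℕ) (i : ℤ) : ℕ :=
  if 0 ≤ i then c + (J ∩ Finset.Icc 1 i.toNat).card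
  else c + (I ∩ Finset.Icc 1 (-i).toNat).card

/-- The increasing subset `A_{(c,I,J)}` of `Γ(k,ℓ)`. -/
def Acij (l c : ℕ) (I J : Finset ℕ) : Set (ℤ × ℕ) :=
  {p | -(l : ℤ) ≤ p.1 ∧ p.1 ≤ (l : ℤ) ∧ 1 ≤ p.2 ∧ p.2 ≤ aSeq c I J p.1}

/-- The increasing subset `A_{(c,I,J)} ∪ Z` of `Γ̃(k,ℓ)`. -/
def AcijT (l c : ℕ) (I J : Finset ℕ) (Z : Finset (ℕ × ℕ)) : Set GammaAmb :=
  Sum.inl '' Acij l c I J ∪ Sum.inr '' (Z : Set (ℕ × ℕ))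

def IsIncreasingG (k l : ℕ) (A : Set (ℤ × ℕ)) : Prop :=
  A ⊆ gammaSet k l ∧ ∀ a ∈ A, ∀ x ∈ gammaSet k l, gammaGE k l x a → x ∈ A

def IsIncreasingT (k l : ℕ) (A : Set GammaAmb) : Prop :=
  A ⊆ gammaTildeSet k l ∧ ∀ a ∈ A, ∀ x ∈ gammaTildeSet k l, tildeGE k l x a → x ∈ A

/-- Characteristic function `χ_A`. -/
def chiInd (A : Set GammaAmb) : GammaAmb → ℕ := A.indicator fun _ => 1

/-! ### The polynomial algebra `P_{n,k,ℓ}` and the action of `U_n × U_k` -/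

/-- Index type for the variables of `P_{n,k,ℓ}` (all indices 0-based):
`inl (i,j) ↦ x_{i+1,j+1}`, `inr (inl (i,j)) ↦ y_{i+1,j+1}`,
`inr (inr (inl (i,j))) ↦ r_{i+1,k+j+1}`, `inr (inr (inr ((s,t),_))) ↦ r_{k+s+1,k+t+1}`. -/
abbrev VarIdx (n k l : ℕ) : Type :=
  (Fin n × Fin k) ⊕ (Fin n × Fin l) ⊕ (Fin k × Fin l) ⊕ {p : Fin l × Fin l // p.1 < p.2}

abbrev PRing (n k l : ℕ) : Type := MvPolynomial (VarIdx n k l) ℂ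

/-- The variable `x_{i,j}` (1-based indices). -/
def xP (n k l : ℕ) (i j : ℕ) : PRing n k l :=
  if h : 1 ≤ i ∧ i ≤ n ∧ 1 ≤ j ∧ j ≤ k then
    X (Sum.inl (⟨i - 1, by omega⟩, ⟨j - 1, by omega⟩)) else 0

/-- The variable `y_{i,j}` (1-based indices). -/
def yP (n k l : ℕ) (i j : ℕ) : PRing n k l :=
  if h : 1 ≤ i ∧ i ≤ n ∧ 1 ≤ j ∧ j ≤ l then
    X (Sum.inr (Sum.inl (⟨i - 1, by omega⟩, ⟨j - 1, by omega⟩))) else 0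

/-- The variable `r_{i,k+j}` (1-based `i ≤ k`, `j ≤ l`). -/
def rP (n k l : ℕ) (i j : ℕ) : PRing n k l :=
  if h : 1 ≤ i ∧ i ≤ k ∧ 1 ≤ j ∧ j ≤ l then
    X (Sum.inr (Sum.inr (Sum.inl (⟨i - 1, by omega⟩, ⟨j - 1, by omega⟩)))) else 0

/-- The variable `r_{k+s,k+t}` (1-based, `1 ≤ s < t ≤ l`). -/
def sP (n k l : ℕ) (s t : ℕ) : PRing n k l :=
  if h : 1 ≤ s ∧ s < t ∧ t ≤ l then
    X (Sum.inr (Sum.inr (Sum.inr ⟨(⟨s - 1, by omega⟩, ⟨t - 1, by omega⟩),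
      by exact Fin.mk_lt_mk.mpr (by omega)⟩))) else 0

/-- Upper triangular unipotent matrices. -/
def IsUU {m : ℕ} (g : Matrix (Fin m) (Fin m) ℂ) : Prop :=
  (∀ i, g i i = 1) ∧ ∀ i j : Fin m, j < i → g i j = 0

/-- The action of a pair of matrices `(g,h)` on `P_{n,k,ℓ}`:
`x_{i,j} ↦ (gᵀXh)_{i,j}`, `y_{i,j} ↦ (gᵀY_j)_i`, `r_{i,k+j} ↦ (hᵀR_j)_i`,
`r_{k+s,k+t} ↦ r_{k+s,k+t}`. -/
def uAct (n k l : ℕ) (g : Matrix (Fin n) (Fin n) ℂ) (h : Matrix (Fin k) (Fin k) ℂ) :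
    PRing n k l →ₐ[ℂ] PRing n k l :=
  aeval fun v => match v with
    | Sum.inl (i, j) => ∑ a : Fin n, ∑ b : Fin k, C (g a i * h b j) * X (Sum.inl (a, b))
    | Sum.inr (Sum.inl (i, j)) => ∑ a : Fin n, C (g a i) * X (Sum.inr (Sum.inl (a, j)))
    | Sum.inr (Sum.inr (Sum.inl (i, j))) =>
        ∑ b : Fin k, C (h b i) * X (Sum.inr (Sum.inr (Sum.inl (b, j))))
    | Sum.inr (Sum.inr (Sum.inr st)) => X (Sum.inr (Sum.inr (Sum.inr st)))

/-- The Pieri algebra `𝔄_{n,k,ℓ} = (P_{n,k,ℓ})^{U_n × U_k}`. -/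
def invariants (n k l : ℕ) : Subalgebra ℂ (PRing n k l) where
  carrier := {f | ∀ g h, IsUU g → IsUU h → uAct n k l g h f = f}
  mul_mem' := by
    intro a b ha hb g h hg hh
    rw [map_mul, ha g h hg hh, hb g h hg hh]
  add_mem' := by
    intro a b ha hb g h hg hh
    rw [map_add, ha g h hg hh, hb g h hg hh]
  one_mem' := fun g h _ _ => map_one _
  zero_mem' := fun g h _ _ => map_zero _
  algebraMap_mem' := fun c g h _ _ => (uAct _ _ _ g h).commutes c

/-! ### The graded lexicographic order -/

/-- Rank of a variable: smaller rank = bigger variable in the order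
`x_{1,1} > x_{2,1} > ⋯ > x_{n,k} > y_{1,1} > ⋯ > y_{n,ℓ} > r_{1,k+1} > ⋯ > r_{k,k+ℓ}
> r_{k+1,k+2} > r_{k+1,k+3} > r_{k+2,k+3} > ⋯ > r_{k+ℓ-1,k+ℓ}`. -/
def vrank (n k l : ℕ) : VarIdx n k l → ℕ
  | Sum.inl (i, j) => j.val * n + i.val
  | Sum.inr (Sum.inl (i, j)) => n * k + j.val * n + i.val
  | Sum.inr (Sum.inr (Sum.inl (i, j))) => n * k + n * l + j.val * k + i.val
  | Sum.inr (Sum.inr (Sum.inr ⟨(s, t), _⟩)) =>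
      n * k + n * l + k * l + t.val * (t.val - 1) / 2 + s.val

/-- Total degree of an exponent vector. -/
def mdeg {n k l : ℕ} (α : VarIdx n k l →₀ ℕ) : ℕ := α.sum fun _ e => e

/-- `grlexLT n k l α β` : the monomial `x^α` is smaller than `x^β` in the graded
lexicographic order. -/
def grlexLT (n k l : ℕ) (α β : VarIdx n k l →₀ ℕ) : Prop :=
  mdeg α < mdeg β ∨ (mdeg α = mdeg β ∧
    ∃ v, α v < β v ∧ ∀ w, vrank n k l w < vrank n k l v → α w = β w)

/-- `IsLeadMon n k l f α` : `x^α` is the leading monomial of `f`. -/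
def IsLeadMon (n k l : ℕ) (f : PRing n k l) (α : VarIdx n k l →₀ ℕ) : Prop :=
  α ∈ f.support ∧ ∀ β ∈ f.support, β ≠ α → grlexLT n k l β α

/-! ### The determinants `η_{(c,I,J)}` -/

/-- The determinant `η_{(c,I,J)}`. -/
def eta (n k l : ℕ) (c : ℕ) (I J : Finset ℕ) : PRing n k l :=
  Matrix.det (Matrix.of fun a b : Fin (c + I.card + J.card) =>
    if a.val < c + J.card then
      if b.val < c + I.card then xP n k l (a.val + 1) (b.val + 1)
      else yP n k l (a.val + 1) ((J.sort (· ≤ ·)).getD (b.val - (c + I.card)) 0)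
    else
      if b.val < c + I.card then
        rP n k l (b.val + 1) ((I.sort (· ≤ ·)).getD (a.val - (c + J.card)) 0)
      else 0)

/-- `η_{χ_B}` for `B = A_{(c,I,J)} ∪ Z`. -/
def etaChi (n k l : ℕ) (c : ℕ) (I J : Finset ℕ) (Z : Finset (ℕ × ℕ)) : PRing n k l :=
  eta n k l c I J * ∏ p ∈ Z, sP n k l p.1 p.2

/-- `IsEtaOf n k l g q` : `q = ∏_j η_{χ_{A_j}}^{c_j}` for some expression
`g = ∑_j c_j χ_{A_j}` with `A_1 ⊆ ⋯ ⊆ A_N` a chain of increasing subsets of `Γ̃(k,ℓ)`. -/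
def IsEtaOf (n k l : ℕ) (g : GammaAmb → ℕ) (q : PRing n k l) : Prop :=
  ∃ (N : ℕ) (co : Fin N → ℕ) (A : Fin N → Set GammaAmb) (fac : Fin N → PRing n k l),
    (∀ j, IsIncreasingT k l (A j)) ∧
    (∀ j j' : Fin N, j ≤ j' → A j ⊆ A j') ∧
    (g = ∑ j : Fin N, co j • chiInd (A j)) ∧
    (∀ j, ∃ (c : ℕ) (I J : Finset ℕ) (Z : Finset (ℕ × ℕ)),
      c ≤ k ∧ I ⊆ Finset.Icc 1 l ∧ J ⊆ Finset.Icc 1 l ∧ I.card ≤ k - c ∧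
      (↑Z : Set (ℕ × ℕ)) ⊆ epsSet l ∧ A j = AcijT l c I J Z ∧
      fac j = etaChi n k l c I J Z) ∧
    q = ∏ j : Fin N, fac j ^ co j

/-- The monomial `m(g)` attached to `g ∈ Ω(k,ℓ)`. -/
def mOf (n k l : ℕ) (g : GammaAmb → ℕ) : PRing n k l :=
  (∏ u ∈ Finset.Icc 1 k, xP n k l u u ^ g (Sum.inl ((0 : ℤ), u)))
  * (∏ b ∈ Finset.Icc 1 l, ∏ a ∈ Finset.Icc 1 (k + b),
      yP n k l a b ^ (g (Sum.inl ((b : ℤ), a)) - g (Sum.inl ((b : ℤ) - 1, a))))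
  * (∏ j ∈ Finset.Icc 1 l, ∏ i ∈ Finset.Icc 1 k,
      rP n k l i j ^ (g (Sum.inl (-(j : ℤ), i)) - g (Sum.inl (-(j : ℤ) + 1, i))))
  * (∏ t ∈ Finset.Icc 1 l, ∏ s ∈ Finset.Ico 1 t, sP n k l s t ^ g (Sum.inr (s, t)))

/-! ### The homogeneous components `E_{F,D,P}` -/

/-- `f` is homogeneous of degree `d` in the set `S` of variables. -/
def HomogOn (n k l : ℕ) (f : PRing n k l) (S : Set (VarIdx n k l)) (d : ℕ) : Prop :=
  ∀ α ∈ f.support, (∑ v ∈ α.support, S.indicator (fun w => α w) v) = d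

/-- The variables `x_{i,1},…,x_{i,k}, y_{i,1},…,y_{i,ℓ}` (1-based `i`). -/
def rowSet (n k l : ℕ) (i : ℕ) : Set (VarIdx n k l) :=
  {v | match v with
    | Sum.inl (a, _) => (a : ℕ) + 1 = i
    | Sum.inr (Sum.inl (a, _)) => (a : ℕ) + 1 = i
    | _ => False}

/-- The variables `x_{1,j},…,x_{n,j}, r_{j,k+1},…,r_{j,k+ℓ}` (1-based `j`). -/
def colSet (n k l : ℕ) (j : ℕ) : Set (VarIdx n k l) :=
  {v | match v with
    | Sum.inl (_, b) => (b : ℕ) + 1 = j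
    | Sum.inr (Sum.inr (Sum.inl (b, _))) => (b : ℕ) + 1 = j
    | _ => False}

/-- The variables `y_{1,t},…,y_{n,t}, r_{1,k+t},…,r_{k,k+t}`, `r_{k+s,k+t} (s<t)`,
`r_{k+t,k+t'} (t<t')` (1-based `t`). -/
def tSet (n k l : ℕ) (t : ℕ) : Set (VarIdx n k l) :=
  {v | match v with
    | Sum.inr (Sum.inl (_, b)) => (b : ℕ) + 1 = t
    | Sum.inr (Sum.inr (Sum.inl (_, b))) => (b : ℕ) + 1 = t
    | Sum.inr (Sum.inr (Sum.inr ⟨(s, u), _⟩)) => (s : ℕ) + 1 = t ∨ (u : ℕ) + 1 = t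
    | _ => False}

theorem homogOn_add {n k l : ℕ} {f g : PRing n k l} {S : Set (VarIdx n k l)} {d : ℕ}
    (hf : HomogOn n k l f S d) (hg : HomogOn n k l g S d) : HomogOn n k l (f + g) S d := by
  intro α hα
  by_cases h : α ∈ f.support
  · exact hf α h
  · refine hg α ?_
    by_contra hg'
    refine MvPolynomial.mem_support_iff.mp hα ?_
    rw [MvPolynomial.coeff_add, MvPolynomial.notMem_support_iff.mp h,
      MvPolynomial.notMem_support_iff.mp hg', add_zero]

/-- The homogeneous component `E_{F,D,P}` of `𝔄_{n,k,ℓ}`. -/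
def Esub (n k l : ℕ) (F D : ℕ →₀ ℕ) (Pv : Fin l → ℕ) : Submodule ℂ (PRing n k l) where
  carrier := {f | f ∈ invariants n k l ∧
    (∀ i : ℕ, 1 ≤ i → i ≤ n → HomogOn n k l f (rowSet n k l i) (F (i - 1))) ∧
    (∀ j : ℕ, 1 ≤ j → j ≤ k → HomogOn n k l f (colSet n k l j) (D (j - 1))) ∧
    (∀ t : Fin l, HomogOn n k l f (tSet n k l ((t : ℕ) + 1)) (Pv t))}
  add_mem' := by
    rintro f g ⟨hf0, hf1, hf2, hf3⟩ ⟨hg0, hg1, hg2, hg3⟩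
    exact ⟨add_mem hf0 hg0,
      fun i h1 h2 => homogOn_add (hf1 i h1 h2) (hg1 i h1 h2),
      fun j h1 h2 => homogOn_add (hf2 j h1 h2) (hg2 j h1 h2),
      fun t => homogOn_add (hf3 t) (hg3 t)⟩
  zero_mem' := by
    refine ⟨zero_mem _, fun i _ _ α hα => ?_, fun j _ _ α hα => ?_, fun t α hα => ?_⟩ <;>
      simp at hα
  smul_mem' := by
    rintro c f ⟨hf0, hf1, hf2, hf3⟩
    refine ⟨(invariants n k l).smul_mem hf0 c,
      fun i h1 h2 α hα => hf1 i h1 h2 α (MvPolynomial.support_smul hα),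
      fun j h1 h2 α hα => hf2 j h1 h2 α (MvPolynomial.support_smul hα),
      fun t α hα => hf3 t α (MvPolynomial.support_smul hα)⟩

/-- The set of leading monomials of nonzero elements of `𝔄_{n,k,ℓ}`
(as monic monomial polynomials). -/
def LMset (n k l : ℕ) : Set (PRing n k l) :=
  {m | ∃ f ∈ invariants n k l, ∃ α, IsLeadMon n k l f α ∧
    m = MvPolynomial.monomial α (1 : ℂ)}


/-! ### Block for Statement 1 : the quotient `𝒫(M_{n,k+ℓ})/J` -/

abbrev QRing (n m : ℕ) : Type := MvPolynomial (Fin n × Fin m) ℂ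

/-- `r_{i,j} = ∑_{a=1}^n x_{a,i} x_{n-a+1,j}`. -/
def rQ (n m : ℕ) (i j : Fin m) : QRing n m := ∑ a : Fin n, X (a, i) * X (a.rev, j)

/-- The ideal `J` generated by `{r_{i,j} : 1 ≤ i,j ≤ k} ∪ {r_{k+j,k+j} : 1 ≤ j ≤ ℓ}`. -/
def JId (n k l : ℕ) : Ideal (QRing n (k + l)) :=
  Ideal.span ({p | ∃ i j : Fin (k + l), (i : ℕ) < k ∧ (j : ℕ) < k ∧ p = rQ n (k + l) i j} ∪
    {p | ∃ j : Fin (k + l), k ≤ (j : ℕ) ∧ p = rQ n (k + l) j j})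

/-- The substitution `x_{i,j} ↦ (g⁻¹ X h)_{i,j}` on `𝒫(M_{n,m})`. -/
def actQ (n m : ℕ) (g : Matrix (Fin n) (Fin n) ℂ) (h : Matrix (Fin m) (Fin m) ℂ) :
    QRing n m →ₐ[ℂ] QRing n m :=
  aeval fun p => ∑ a : Fin n, ∑ b : Fin m, C (g⁻¹ p.1 a * h b p.2) * X (a, b)

/-- The matrix of the symmetric bilinear form `⟨u,v⟩ = ∑ u_a v_{n-a+1}`. -/
def flipMat (n : ℕ) : Matrix (Fin n) (Fin n) ℂ := fun i j => if j = i.rev then 1 else 0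

/-- `g ∈ SO_n` : `g` preserves the form and has determinant 1. -/
def IsSO (n : ℕ) (g : Matrix (Fin n) (Fin n) ℂ) : Prop :=
  g.transpose * flipMat n * g = flipMat n ∧ g.det = 1

/-- `diag(h, 1_ℓ)`, the embedding of `GL_k` into `GL_{k+ℓ}`. -/
def embedU (k l : ℕ) (h : Matrix (Fin k) (Fin k) ℂ) : Matrix (Fin (k + l)) (Fin (k + l)) ℂ :=
  fun i j =>
    if hij : (i : ℕ) < k ∧ (j : ℕ) < k then h ⟨i.val, hij.1⟩ ⟨j.val, hij.2⟩
    else if i = j then 1 else 0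

/-- The invariants `(𝒫(M_{n,k+ℓ})/J)^{U_{SO_n} × U_k}` (invariance tested on every
representative). -/
def SqSet (n k l : ℕ) : Set (QRing n (k + l) ⧸ JId n k l) :=
  {q | ∀ (g : Matrix (Fin n) (Fin n) ℂ) (h : Matrix (Fin k) (Fin k) ℂ),
      IsUU g → IsSO n g → IsUU h →
      ∀ f : QRing n (k + l), Ideal.Quotient.mk (JId n k l) f = q →
        Ideal.Quotient.mk (JId n k l) (actQ n (k + l) g (embedU k l h) f) = q}

/-! ### Block for Statement 16 : the `Sp_{2n}` Pieri algebra -/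

abbrev QSp (n k : ℕ) : Type := MvPolynomial (Fin (2 * n) × Fin k) ℂ
abbrev YRing (n l : ℕ) : Type := MvPolynomial (Fin (2 * n) × Fin l) ℂ

/-- The matrix of the symplectic form `(u,v) = ∑_{a=1}^n (u_a v_{2n+1-a} - u_{2n+1-a} v_a)`. -/
def symplMat (n : ℕ) : Matrix (Fin (2 * n)) (Fin (2 * n)) ℂ :=
  fun i j => if j = i.rev then (if (i : ℕ) < n then 1 else -1) else 0

def IsSp (n : ℕ) (g : Matrix (Fin (2 * n)) (Fin (2 * n)) ℂ) : Prop :=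
  g.transpose * symplMat n * g = symplMat n

/-- The substitution `x_{i,j} ↦ (gᵀ T h)_{i,j}` on `𝒫(M_{2n,k})`. -/
def actSp (n k : ℕ) (g : Matrix (Fin (2 * n)) (Fin (2 * n)) ℂ)
    (h : Matrix (Fin k) (Fin k) ℂ) : QSp n k →ₐ[ℂ] QSp n k :=
  aeval fun p => ∑ a : Fin (2 * n), ∑ b : Fin k, C (g a p.1 * h b p.2) * X (a, b)

/-- The substitution `y_{i,j} ↦ (gᵀ Y_j)_i` on `𝒫(ℂ_1^{2n}) ⊗ ⋯ ⊗ 𝒫(ℂ_ℓ^{2n})`. -/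
def actY (n l : ℕ) (g : Matrix (Fin (2 * n)) (Fin (2 * n)) ℂ) : YRing n l →ₐ[ℂ] YRing n l :=
  aeval fun p => ∑ a : Fin (2 * n), C (g a p.1) * X (a, p.2)

/-- The ideal `I_{2n,k}` generated by all `Sp_{2n}`-invariants with zero constant term. -/
def ISp (n k : ℕ) : Ideal (QSp n k) :=
  Ideal.span {f | (∀ g, IsSp n g → actSp n k g 1 f = f) ∧ MvPolynomial.constantCoeff f = 0}

/-- The canonical surjection `𝒫(M_{2n,k}) ⊗ 𝒫(ℂ^{2n})^{⊗ℓ} → (𝒫(M_{2n,k})/I_{2n,k}) ⊗ ⋯`. -/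
def PsiSp (n k l : ℕ) : (QSp n k ⊗[ℂ] YRing n l) →ₐ[ℂ] ((QSp n k ⧸ ISp n k) ⊗[ℂ] YRing n l) :=
  Algebra.TensorProduct.map (Ideal.Quotient.mkₐ ℂ (ISp n k)) (AlgHom.id ℂ (YRing n l))

/-- The `Sp_{2n}` Pieri algebra `𝒜_{n,k,ℓ}`, as the set of elements of
`(𝒫(M_{2n,k})/I_{2n,k}) ⊗ 𝒫(ℂ_1^{2n}) ⊗ ⋯ ⊗ 𝒫(ℂ_ℓ^{2n})` fixed by `U_{Sp_{2n}} × U_k`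
(invariance tested on every representative). -/
def ASpSet (n k l : ℕ) : Set ((QSp n k ⧸ ISp n k) ⊗[ℂ] YRing n l) :=
  {t | ∀ (g : Matrix (Fin (2 * n)) (Fin (2 * n)) ℂ) (h : Matrix (Fin k) (Fin k) ℂ),
      IsSp n g → IsUU g → IsUU h →
      ∀ w : QSp n k ⊗[ℂ] YRing n l, PsiSp n k l w = t →
        PsiSp n k l (Algebra.TensorProduct.map (actSp n k g h) (actY n l g) w) = t}


/-! ### Block for Statement 15 : flat families -/

/-- A flat `ℂ[t]`-algebra with general fibre `𝔄_{n,k,ℓ}` and special fibre `ℂ[Ω(k,ℓ)]`. -/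
structure FlatFam (n k l : ℕ) : Type 1 where
  R : Type
  [cr : CommRing R]
  [algC : Algebra ℂ R]
  [algP : Algebra (Polynomial ℂ) R]
  [tower : IsScalarTower ℂ (Polynomial ℂ) R]
  flat : Module.Flat (Polynomial ℂ) R
  general : ∀ a : ℂ, a ≠ 0 →
    Nonempty ((R ⧸ Ideal.span {algebraMap (Polynomial ℂ) R (Polynomial.X - Polynomial.C a)})
      ≃ₐ[ℂ] invariants n k l)
  special : Nonempty ((R ⧸ Ideal.span {algebraMap (Polynomial ℂ) R Polynomial.X})
      ≃ₐ[ℂ] AddMonoidAlgebra ℂ (OmegaM k l))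

/-! ### Block for Statement 17 : the real cone -/

/-- The elements of `Γ̃(k,ℓ)` as a subtype. -/
abbrev GTElt (k l : ℕ) : Type := ↥(gammaTildeSet k l)

/-- Extension by zero of a function on `Γ̃(k,ℓ)` to the ambient type. -/
def extZ (k l : ℕ) (f : GTElt k l → ℝ) : GammaAmb → ℝ :=
  fun p => if h : p ∈ gammaTildeSet k l then f ⟨p, h⟩ else 0

/-- `P_j(f)` for a real-valued function `f`. -/
def PfunR (k l : ℕ) (f : GammaAmb → ℝ) (j : ℕ) : ℝ :=
  ((∑ a ∈ Finset.Icc 1 (k + j), f (Sum.inl ((j : ℤ), a)))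
      - ∑ b ∈ Finset.Icc 1 (k + j - 1), f (Sum.inl ((j : ℤ) - 1, b)))
    + (∑ a ∈ Finset.Icc 1 k, (f (Sum.inl (-(j : ℤ), a)) - f (Sum.inl (-(j : ℤ) + 1, a))))
    + (∑ a ∈ Finset.Ico 1 j, f (Sum.inr (a, j)))
    + ∑ b ∈ Finset.Icc (j + 1) l, f (Sum.inr (j, b))

/-- The set `𝒞_{F,D,P}` of nonnegative order-preserving real functions on `Γ̃(k,ℓ)`
with `f_{-ℓ} = D`, `f_ℓ = F` and `P(f) = P`. -/
def CsetFDP (k l : ℕ) (D F : ℕ →₀ ℕ) (P : Fin l → ℕ) : Set (GTElt k l → ℝ) :=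
  {f | (∀ a b : GammaAmb, tildeGE k l a b → extZ k l f b ≤ extZ k l f a) ∧
    (∀ p, 0 ≤ f p) ∧
    (∀ a : ℕ, 1 ≤ a → a ≤ k → extZ k l f (Sum.inl (-(l : ℤ), a)) = (D (a - 1) : ℝ)) ∧
    (∀ a : ℕ, 1 ≤ a → a ≤ k + l → extZ k l f (Sum.inl ((l : ℤ), a)) = (F (a - 1) : ℝ)) ∧
    (∀ j : Fin l, PfunR k l (extZ k l f) ((j : ℕ) + 1) = (P j : ℝ))}


/-! ### Auxiliary lemmas for Statement 5 -/

lemma seg_mem {S : Finset ℕ} (h0 : 0 ∉ S)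
    (hdc : ∀ j ∈ S, ∀ j', 1 ≤ j' → j' ≤ j → j' ∈ S) (j : ℕ) (h1 : 1 ≤ j) :
    j ∈ S ↔ j ≤ S.card := by
  constructor
  · intro hj
    have hsub : Finset.Icc 1 j ⊆ S := fun x hx =>
      hdc j hj x (Finset.mem_Icc.mp hx).1 (Finset.mem_Icc.mp hx).2
    have := Finset.card_le_card hsub
    simpa using this
  · intro hj
    by_contra hjS
    have hsub : S ⊆ Finset.Icc 1 (j - 1) := by
      intro x hx
      have hx1 : 1 ≤ x := by
        rcases Nat.eq_zero_or_pos x with h | h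
        · exact absurd (h ▸ hx) h0
        · exact h
      have hxj : x < j := by
        by_contra hc
        exact hjS (hdc x hx j h1 (by omega))
      exact Finset.mem_Icc.mpr ⟨hx1, by omega⟩
    have := Finset.card_le_card hsub
    simp at this
    omega

lemma horiz {k l : ℕ} {i : ℤ} {j : ℕ} (hl : 0 < l) (hi1 : -(l : ℤ) ≤ i) (hi2 : i ≤ l)
    (hj : 1 ≤ j) (hj2 : (j : ℤ) + 1 ≤ (k : ℤ) + max 0 i) :
    gammaGE k l (i, j) (i, j + 1) := by
  rcases le_or_gt 0 i with hpos | hneg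
  · lift i to ℕ using hpos with m hm
    have hmax : max (0 : ℤ) (m : ℤ) = m := by omega
    rw [hmax] at hj2
    rcases lt_or_eq_of_le hi2 with hml | hml
    · have hml' : m < l := by exact_mod_cast hml
      have s1 : gammaStep k l ((m : ℤ), j) ((m : ℤ) + 1, j + 1) :=
        Or.inr (Or.inl ⟨m, j, hml', hj, by omega, rfl, rfl⟩)
      have s2 : gammaStep k l ((m : ℤ) + 1, j + 1) ((m : ℤ), j + 1) :=
        Or.inl ⟨m, j + 1, hml', by omega, by omega, rfl, rfl⟩
      exact Relation.ReflTransGen.head s1 (Relation.ReflTransGen.single s2)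
    · have hml' : m = l := by exact_mod_cast hml
      have hl1 : 1 ≤ m := by omega
      have s1 : gammaStep k l ((m : ℤ), j) (((m - 1 : ℕ) : ℤ), j) :=
        Or.inl ⟨m - 1, j, by omega, hj, by omega, by
          simp only [Prod.mk.injEq]; exact ⟨by omega, trivial⟩, rfl⟩
      have s2 : gammaStep k l (((m - 1 : ℕ) : ℤ), j) ((m : ℤ), j + 1) :=
        Or.inr (Or.inl ⟨m - 1, j, by omega, hj, by omega, rfl, by
          simp only [Prod.mk.injEq]; exact ⟨by omega, trivial⟩⟩)
      exact Relation.ReflTransGen.head s1 (Relation.ReflTransGen.single s2)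
  · have hmax : max (0 : ℤ) i = 0 := by omega
    rw [hmax] at hj2
    obtain ⟨m, rfl⟩ : ∃ m : ℕ, i = -(m : ℤ) := ⟨(-i).toNat, by omega⟩
    have hm1 : 1 ≤ m := by omega
    rcases lt_or_eq_of_le (show (m : ℤ) ≤ l by omega) with hml | hml
    · have hml' : m < l := by exact_mod_cast hml
      have s1 : gammaStep k l (-(m : ℤ), j) (-(m : ℤ) - 1, j + 1) :=
        Or.inr (Or.inr (Or.inr ⟨m, j, hml', hj, by omega, rfl, rfl⟩))
      have s2 : gammaStep k l (-(m : ℤ) - 1, j + 1) (-(m : ℤ), j + 1) :=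
        Or.inr (Or.inr (Or.inl ⟨m, j + 1, hml', by omega, by omega, rfl, rfl⟩))
      exact Relation.ReflTransGen.head s1 (Relation.ReflTransGen.single s2)
    · have hml' : m = l := by exact_mod_cast hml
      have s1 : gammaStep k l (-(m : ℤ), j) (-((m - 1 : ℕ) : ℤ), j) :=
        Or.inr (Or.inr (Or.inl ⟨m - 1, j, by omega, hj, by omega, by
          simp only [Prod.mk.injEq]; exact ⟨by omega, trivial⟩, rfl⟩))
      have s2 : gammaStep k l (-((m - 1 : ℕ) : ℤ), j) (-(m : ℤ), j + 1) :=
        Or.inr (Or.inr (Or.inr ⟨m - 1, j, by omega, hj, by omega, rfl, by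
          simp only [Prod.mk.injEq]; exact ⟨by omega, trivial⟩⟩))
      exact Relation.ReflTransGen.head s1 (Relation.ReflTransGen.single s2)

lemma horiz_le {k l : ℕ} {i : ℤ} {j j' : ℕ} (hl : 0 < l) (hi1 : -(l : ℤ) ≤ i) (hi2 : i ≤ l)
    (h1 : 1 ≤ j') (h2 : j' ≤ j) (hj : (j : ℤ) ≤ (k : ℤ) + max 0 i) :
    gammaGE k l (i, j') (i, j) := by
  revert hj
  induction j, h2 using Nat.le_induction with
  | base => exact fun _ => Relation.ReflTransGen.refl
  | succ n hn ih =>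
      intro hj
      have hn' : (n : ℤ) ≤ (k : ℤ) + max 0 i := by omega
      exact (ih hn').trans (horiz hl hi1 hi2 (by omega) (by omega))

private def levS (k l : ℕ) (A : Set (ℤ × ℕ)) (i : ℤ) : Finset ℕ :=
  (Finset.Icc 1 (k + l)).filter fun j => (i, j) ∈ A

private def aLev (k l : ℕ) (A : Set (ℤ × ℕ)) (i : ℤ) : ℕ := (levS k l A i).card

lemma part1 (k l : ℕ) (hl : 0 < l) (A : Set (ℤ × ℕ)) (hA : IsIncreasingG k l A) :
    ∃ (c : ℕ) (I J : Finset ℕ), c ≤ k ∧ I ⊆ Finset.Icc 1 l ∧ J ⊆ Finset.Icc 1 l ∧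
      I.card ≤ k - c ∧ A = Acij l c I J := by
  obtain ⟨hsub, hinc⟩ := hA
  set a : ℤ → ℕ := aLev k l A with hadef
  have hgam : ∀ i (j : ℕ), (i, j) ∈ A →
      -(l : ℤ) ≤ i ∧ i ≤ l ∧ 1 ≤ j ∧ (j : ℤ) ≤ (k : ℤ) + max 0 i := by
    intro i j hij
    simpa [gammaSet] using hsub hij
  have h0 : ∀ i, 0 ∉ levS k l A i := by
    intro i h
    simp only [levS, Finset.mem_filter] at h
    have := (hgam i 0 h.2).2.2.1; omega
  have hdc : ∀ i, ∀ j ∈ levS k l A i, ∀ j', 1 ≤ j' → j' ≤ j → j' ∈ levS k l A i := by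
    intro i j hj j' h1 h2
    simp only [levS, Finset.mem_filter, Finset.mem_Icc] at hj ⊢
    obtain ⟨⟨_, hjkl⟩, hjA⟩ := hj
    obtain ⟨hi1, hi2, hj1, hjb⟩ := hgam i j hjA
    refine ⟨⟨h1, by omega⟩, ?_⟩
    refine hinc _ hjA (i, j') ?_ (horiz_le hl hi1 hi2 h1 h2 hjb)
    simp only [gammaSet, Set.mem_setOf_eq]
    exact ⟨hi1, hi2, h1, by omega⟩
  have hmem : ∀ i (j : ℕ), 1 ≤ j → ((i, j) ∈ A ↔ j ≤ a i) := by
    intro i j h1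
    rw [hadef, aLev, ← seg_mem (h0 i) (hdc i) j h1]
    simp only [levS, Finset.mem_filter, Finset.mem_Icc]
    constructor
    · intro hij
      obtain ⟨hi1, hi2, hj1, hjb⟩ := hgam i j hij
      exact ⟨⟨h1, by omega⟩, hij⟩
    · exact fun h => h.2
  have habd : ∀ i, (a i : ℤ) ≤ (k : ℤ) + max 0 i := by
    intro i
    rcases Nat.eq_zero_or_pos (a i) with h | h
    · rw [h]; omega
    · exact (hgam i (a i) ((hmem i (a i) h).2 le_rfl)).2.2.2
  have hstepA : ∀ p q : ℤ × ℕ, p ∈ A → gammaStep k l q p → q ∈ gammaSet k l → q ∈ A :=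
    fun p q hp hs hq => hinc p hp q hq (Relation.ReflTransGen.single hs)
  have hup : ∀ m : ℕ, m < l → a (m : ℤ) ≤ a ((m : ℤ) + 1) ∧ a ((m : ℤ) + 1) ≤ a (m : ℤ) + 1 := by
    intro m hm
    constructor
    · rcases Nat.eq_zero_or_pos (a (m : ℤ)) with h | h
      · omega
      · have hp : ((m : ℤ), a (m : ℤ)) ∈ A := (hmem _ _ h).2 le_rfl
        have hb : ((a (m : ℤ) : ℤ)) ≤ (k : ℤ) + m := by have := habd (m : ℤ); omega
        have hq : ((m : ℤ) + 1, a (m : ℤ)) ∈ A := by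
          refine hstepA _ _ hp (Or.inl ⟨m, a (m : ℤ), hm, h, by omega, rfl, rfl⟩) ?_
          simp only [gammaSet, Set.mem_setOf_eq]
          exact ⟨by omega, by omega, h, by omega⟩
        exact (hmem _ _ h).1 hq
    · rcases Nat.lt_or_ge (a ((m : ℤ) + 1)) 2 with h | h
      · omega
      · set j := a ((m : ℤ) + 1) - 1 with hjdef
        have hj1 : 1 ≤ j := by omega
        have hp : ((m : ℤ) + 1, j + 1) ∈ A := (hmem _ _ (by omega)).2 (by omega)
        have hb : (a ((m : ℤ) + 1) : ℤ) ≤ (k : ℤ) + m + 1 := by have := habd ((m : ℤ) + 1); omega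
        have hq : ((m : ℤ), j) ∈ A := by
          refine hstepA _ _ hp (Or.inr (Or.inl ⟨m, j, hm, hj1, by omega, rfl, rfl⟩)) ?_
          simp only [gammaSet, Set.mem_setOf_eq]
          exact ⟨by omega, by omega, hj1, by omega⟩
        have := (hmem _ _ hj1).1 hq
        omega
  have hdn : ∀ m : ℕ, m < l →
      a (-(m : ℤ)) ≤ a (-(m : ℤ) - 1) ∧ a (-(m : ℤ) - 1) ≤ a (-(m : ℤ)) + 1 := by
    intro m hm
    constructor
    · rcases Nat.eq_zero_or_pos (a (-(m : ℤ))) with h | h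
      · omega
      · have hp : (-(m : ℤ), a (-(m : ℤ))) ∈ A := (hmem _ _ h).2 le_rfl
        have hb : (a (-(m : ℤ)) : ℤ) ≤ (k : ℤ) := by have := habd (-(m : ℤ)); omega
        have hq : (-(m : ℤ) - 1, a (-(m : ℤ))) ∈ A := by
          refine hstepA _ _ hp
            (Or.inr (Or.inr (Or.inl ⟨m, a (-(m : ℤ)), hm, h, by omega, rfl, rfl⟩))) ?_
          simp only [gammaSet, Set.mem_setOf_eq]
          exact ⟨by omega, by omega, h, by omega⟩
        exact (hmem _ _ h).1 hq
    · rcases Nat.lt_or_ge (a (-(m : ℤ) - 1)) 2 with h | h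
      · omega
      · set j := a (-(m : ℤ) - 1) - 1 with hjdef
        have hj1 : 1 ≤ j := by omega
        have hp : (-(m : ℤ) - 1, j + 1) ∈ A := (hmem _ _ (by omega)).2 (by omega)
        have hb : (a (-(m : ℤ) - 1) : ℤ) ≤ (k : ℤ) := by have := habd (-(m : ℤ) - 1); omega
        have hq : (-(m : ℤ), j) ∈ A := by
          refine hstepA _ _ hp (Or.inr (Or.inr (Or.inr ⟨m, j, hm, hj1, by omega, rfl, rfl⟩))) ?_
          simp only [gammaSet, Set.mem_setOf_eq]
          exact ⟨by omega, by omega, hj1, by omega⟩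
        have := (hmem _ _ hj1).1 hq
        omega
  set c : ℕ := a 0 with hcdef
  set I : Finset ℕ := (Finset.Icc 1 l).filter (fun s => a (-(s : ℤ)) = a (-(s : ℤ) + 1) + 1)
    with hIdef
  set J : Finset ℕ := (Finset.Icc 1 l).filter (fun s => a (s : ℤ) = a ((s : ℤ) - 1) + 1)
    with hJdef
  have hseq : ∀ m : ℕ, m ≤ l →
      aSeq c I J (m : ℤ) = a (m : ℤ) ∧ aSeq c I J (-(m : ℤ)) = a (-(m : ℤ)) := by
    intro m
    induction m with
    | zero =>
        intro _
        constructor <;>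
          simp [aSeq, hcdef, Finset.Icc_eq_empty (by omega : ¬(1 : ℕ) ≤ 0)]
    | succ n ih =>
        intro hm
        obtain ⟨ih1, ih2⟩ := ih (by omega)
        have hnl : n < l := by omega
        obtain ⟨hu1, hu2⟩ := hup n hnl
        obtain ⟨hd1, hd2⟩ := hdn n hnl
        have ecast : ((n + 1 : ℕ) : ℤ) = (n : ℤ) + 1 := by push_cast; ring
        have ecastn : (-((n + 1 : ℕ) : ℤ)) = -(n : ℤ) - 1 := by push_cast; ring
        constructor
        · have hmemJ : (n + 1) ∈ J ↔ a ((n : ℤ) + 1) = a (n : ℤ) + 1 := by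
            rw [hJdef, Finset.mem_filter, Finset.mem_Icc, ecast]
            have e2 : (n : ℤ) + 1 - 1 = (n : ℤ) := by ring
            rw [e2]
            constructor
            · exact fun h => h.2
            · exact fun h => ⟨⟨by omega, by omega⟩, h⟩
          have hcard : (J ∩ Finset.Icc 1 (n + 1)).card
              = (J ∩ Finset.Icc 1 n).card + (if n + 1 ∈ J then 1 else 0) := by
            by_cases hJn : n + 1 ∈ J
            · rw [if_pos hJn]
              have hins : J ∩ Finset.Icc 1 (n + 1) = insert (n + 1) (J ∩ Finset.Icc 1 n) := by
                ext x
                simp only [Finset.mem_inter, Finset.mem_Icc, Finset.mem_insert]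
                constructor
                · rintro ⟨hxJ, hx1, hx2⟩
                  rcases eq_or_lt_of_le hx2 with h | h
                  · exact Or.inl h
                  · exact Or.inr ⟨hxJ, hx1, by omega⟩
                · rintro (rfl | ⟨hxJ, hx1, hx2⟩)
                  · exact ⟨hJn, by omega, le_rfl⟩
                  · exact ⟨hxJ, hx1, by omega⟩
              rw [hins, Finset.card_insert_of_notMem ?_]
              intro hmem'
              rw [Finset.mem_inter, Finset.mem_Icc] at hmem'
              exact absurd hmem'.2.2 (by omega)
            · rw [if_neg hJn]
              have hins : J ∩ Finset.Icc 1 (n + 1) = J ∩ Finset.Icc 1 n := by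
                ext x
                simp only [Finset.mem_inter, Finset.mem_Icc]
                constructor
                · rintro ⟨hxJ, hx1, hx2⟩
                  refine ⟨hxJ, hx1, ?_⟩
                  rcases eq_or_lt_of_le hx2 with h | h
                  · exact absurd (h ▸ hxJ) hJn
                  · omega
                · rintro ⟨hxJ, hx1, hx2⟩; exact ⟨hxJ, hx1, by omega⟩
              rw [hins, Nat.add_zero]
          have ih1' : c + (J ∩ Finset.Icc 1 n).card = a (n : ℤ) := by
            rw [← ih1, aSeq, if_pos (by omega : (0 : ℤ) ≤ (n : ℕ))]
            simp
          have egoal : aSeq c I J ((n + 1 : ℕ) : ℤ) = c + (J ∩ Finset.Icc 1 (n + 1)).card := by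
            rw [aSeq, if_pos (by omega : (0 : ℤ) ≤ ((n + 1 : ℕ) : ℤ))]
            simp
          rw [egoal, hcard, ecast]
          by_cases hJn : n + 1 ∈ J
          · rw [if_pos hJn]
            have := hmemJ.mp hJn
            omega
          · rw [if_neg hJn]
            have : ¬(a ((n : ℤ) + 1) = a (n : ℤ) + 1) := fun h => hJn (hmemJ.mpr h)
            omega
        · have hmemI : (n + 1) ∈ I ↔ a (-(n : ℤ) - 1) = a (-(n : ℤ)) + 1 := by
            rw [hIdef, Finset.mem_filter, Finset.mem_Icc, ecastn]
            have e2 : -(n : ℤ) - 1 + 1 = -(n : ℤ) := by ring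
            rw [e2]
            constructor
            · exact fun h => h.2
            · exact fun h => ⟨⟨by omega, by omega⟩, h⟩
          have hcard : (I ∩ Finset.Icc 1 (n + 1)).card
              = (I ∩ Finset.Icc 1 n).card + (if n + 1 ∈ I then 1 else 0) := by
            by_cases hIn : n + 1 ∈ I
            · rw [if_pos hIn]
              have hins : I ∩ Finset.Icc 1 (n + 1) = insert (n + 1) (I ∩ Finset.Icc 1 n) := by
                ext x
                simp only [Finset.mem_inter, Finset.mem_Icc, Finset.mem_insert]
                constructor
                · rintro ⟨hxI, hx1, hx2⟩
                  rcases eq_or_lt_of_le hx2 with h | h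
                  · exact Or.inl h
                  · exact Or.inr ⟨hxI, hx1, by omega⟩
                · rintro (rfl | ⟨hxI, hx1, hx2⟩)
                  · exact ⟨hIn, by omega, le_rfl⟩
                  · exact ⟨hxI, hx1, by omega⟩
              rw [hins, Finset.card_insert_of_notMem ?_]
              intro hmem'
              rw [Finset.mem_inter, Finset.mem_Icc] at hmem'
              exact absurd hmem'.2.2 (by omega)
            · rw [if_neg hIn]
              have hins : I ∩ Finset.Icc 1 (n + 1) = I ∩ Finset.Icc 1 n := by
                ext x
                simp only [Finset.mem_inter, Finset.mem_Icc]
                constructor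
                · rintro ⟨hxI, hx1, hx2⟩
                  refine ⟨hxI, hx1, ?_⟩
                  rcases eq_or_lt_of_le hx2 with h | h
                  · exact absurd (h ▸ hxI) hIn
                  · omega
                · rintro ⟨hxI, hx1, hx2⟩; exact ⟨hxI, hx1, by omega⟩
              rw [hins, Nat.add_zero]
          have ih2' : c + (I ∩ Finset.Icc 1 n).card = a (-(n : ℤ)) := by
            rw [← ih2]
            rcases Nat.eq_zero_or_pos n with rfl | hn
            · simp [aSeq, Finset.Icc_eq_empty (by omega : ¬(1 : ℕ) ≤ 0)]
            · rw [aSeq, if_neg (by omega : ¬(0 : ℤ) ≤ -(n : ℕ))]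
              simp
          have egoal : aSeq c I J (-((n + 1 : ℕ) : ℤ))
              = c + (I ∩ Finset.Icc 1 (n + 1)).card := by
            rw [aSeq, if_neg (by omega : ¬(0 : ℤ) ≤ -((n + 1 : ℕ) : ℤ))]
            simp
          rw [egoal, hcard, ecastn]
          by_cases hIn : n + 1 ∈ I
          · rw [if_pos hIn]
            have := hmemI.mp hIn
            omega
          · rw [if_neg hIn]
            have : ¬(a (-(n : ℤ) - 1) = a (-(n : ℤ)) + 1) := fun h => hIn (hmemI.mpr h)
            omega
  have haseq : ∀ i : ℤ, -(l : ℤ) ≤ i → i ≤ l → aSeq c I J i = a i := by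
    intro i hi1 hi2
    rcases le_or_gt 0 i with h | h
    · obtain ⟨m, rfl⟩ : ∃ m : ℕ, i = (m : ℤ) := ⟨i.toNat, by omega⟩
      exact (hseq m (by exact_mod_cast hi2)).1
    · obtain ⟨m, rfl⟩ : ∃ m : ℕ, i = -(m : ℤ) := ⟨(-i).toNat, by omega⟩
      exact (hseq m (by omega)).2
  refine ⟨c, I, J, ?_, Finset.filter_subset _ _, Finset.filter_subset _ _, ?_, ?_⟩
  · have := habd 0; omega
  · have h1 : aSeq c I J (-(l : ℤ)) = a (-(l : ℤ)) := (hseq l le_rfl).2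
    rw [aSeq, if_neg (by omega : ¬(0 : ℤ) ≤ -(l : ℕ))] at h1
    have h2 : I ∩ Finset.Icc 1 ((- -(l : ℤ)).toNat) = I := by
      rw [Finset.inter_eq_left]
      intro x hx
      have := Finset.mem_Icc.mp (Finset.filter_subset _ _ (hIdef ▸ hx))
      simp only [neg_neg, Int.toNat_natCast]
      exact Finset.mem_Icc.mpr this
    rw [h2] at h1
    have h3 := habd (-(l : ℤ))
    omega
  · ext p
    obtain ⟨i, j⟩ := p
    simp only [Acij, Set.mem_setOf_eq]
    constructor
    · intro hij
      obtain ⟨hi1, hi2, hj1, hjb⟩ := hgam i j hij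
      exact ⟨hi1, hi2, hj1, (haseq i hi1 hi2) ▸ (hmem i j hj1).1 hij⟩
    · rintro ⟨hi1, hi2, hj1, hj2⟩
      exact (hmem i j hj1).2 ((haseq i hi1 hi2) ▸ hj2)

theorem statement_5 (k l : ℕ) (hk : 0 < k) (hl : 0 < l) :
    (∀ A : Set (ℤ × ℕ), IsIncreasingG k l A →
      ∃ (c : ℕ) (I J : Finset ℕ), c ≤ k ∧ I ⊆ Finset.Icc 1 l ∧ J ⊆ Finset.Icc 1 l ∧
        I.card ≤ k - c ∧ A = Acij l c I J) ∧
    (∀ B : Set GammaAmb, IsIncreasingT k l B →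
      ∃ (c : ℕ) (I J : Finset ℕ) (Z : Set (ℕ × ℕ)), c ≤ k ∧ I ⊆ Finset.Icc 1 l ∧
        J ⊆ Finset.Icc 1 l ∧ I.card ≤ k - c ∧ Z ⊆ epsSet l ∧
        B = Sum.inl '' Acij l c I J ∪ Sum.inr '' Z) := by
  constructor
  · exact fun A hA => part1 k l hl A hA
  · intro B hB
    obtain ⟨hsub, hinc⟩ := hB
    set A : Set (ℤ × ℕ) := {p | Sum.inl p ∈ B} with hAdef
    set Z : Set (ℕ × ℕ) := {p | Sum.inr p ∈ B} with hZdef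
    have hAg : IsIncreasingG k l A := by
      constructor
      · intro p hp
        rcases hsub hp with ⟨q, hq, he⟩ | ⟨q, hq, he⟩
        · obtain rfl : q = p := Sum.inl_injective he
          exact hq
        · exact absurd he (by simp)
      · intro p hp x hx hge
        exact hinc _ hp (Sum.inl x) (Or.inl ⟨x, hx, rfl⟩) (Or.inl ⟨x, p, rfl, rfl, hge⟩)
    obtain ⟨c, I, J, hc, hI, hJ, hcard, hAeq⟩ := part1 k l hl A hAg
    refine ⟨c, I, J, Z, hc, hI, hJ, hcard, ?_, ?_⟩
    · intro p hp
      rcases hsub hp with ⟨q, hq, he⟩ | ⟨q, hq, he⟩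
      · exact absurd he (by simp)
      · obtain rfl : q = p := Sum.inr_injective he
        exact hq
    · ext x
      constructor
      · intro hx
        cases x with
        | inl p => exact Or.inl ⟨p, hAeq ▸ (hx : p ∈ A), rfl⟩
        | inr p => exact Or.inr ⟨p, (hx : p ∈ Z), rfl⟩
      · intro hx
        rcases hx with ⟨q, hq, he⟩ | ⟨q, hq, he⟩
        · subst he
          exact (show q ∈ A from hAeq ▸ hq)
        · subst he
          exact (hq : q ∈ Z)

end Pieri
end
end

section
/- Let n, k, ℓ be positive integers with 2(k+ℓ) < n, let 0 ≤ c ≤ k and let I = {i_1 < … < i_u} and J = {j_1 < … < j_v} be subsets of {1,…,ℓ} with u = |I| ≤ k − c. Then η_{(c,I,J)} is nonzero and its leading monomial with respect to the graded lexicographic order is LM(η_{(c,I,J)}) = (∏_{a=1}^{c} x_{a,a}) · (∏_{a=1}^{v} y_{c+a,j_a}) · (∏_{a=1}^{u} r_{c+a,k+i_a}). -/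
open MvPolynomial TensorProduct
open scoped Classical

noncomputable section

namespace Pieri

/-! ### Auxiliary material for the proof of Statement 6 -/

/-- The `a`-th smallest element of `S` (0-based). -/
def sval (S : Finset ℕ) (a : ℕ) : ℕ := (S.sort (· ≤ ·)).getD a 0

lemma sval_mem {S : Finset ℕ} {a : ℕ} (h : a < S.card) : sval S a ∈ S := by
  have hl : a < (S.sort (· ≤ ·)).length := by rwa [Finset.length_sort]
  rw [sval, List.getD_eq_getElem _ _ hl]
  exact (Finset.mem_sort _).1 (List.getElem_mem hl)

lemma sval_strict {S : Finset ℕ} {a b : ℕ} (hab : a < b) (hb : b < S.card) :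
    sval S a < sval S b := by
  have hl : b < (S.sort (· ≤ ·)).length := by rwa [Finset.length_sort]
  have hla : a < (S.sort (· ≤ ·)).length := lt_trans hab hl
  have := (Finset.sortedLT_sort S).strictMono_get
    (show (⟨a, hla⟩ : Fin _) < ⟨b, hl⟩ from hab)
  rw [sval, sval, List.getD_eq_getElem _ _ hla, List.getD_eq_getElem _ _ hl]
  simpa [List.get_eq_getElem] using this

lemma sval_inj {S : Finset ℕ} {a b : ℕ} (ha : a < S.card) (hb : b < S.card)
    (h : sval S a = sval S b) : a = b := by
  rcases lt_trichotomy a b with h1 | h1 | h1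
  · exact absurd h (Nat.ne_of_lt (sval_strict h1 hb))
  · exact h1
  · exact absurd h.symm (Nat.ne_of_lt (sval_strict h1 ha))

/-- Bundle of hypotheses for Statement 6. -/
def s6H (n k l c : ℕ) (I J : Finset ℕ) : Prop :=
  0 < n ∧ 0 < k ∧ 0 < l ∧ 2 * (k + l) < n ∧ c ≤ k ∧
    I ⊆ Finset.Icc 1 l ∧ J ⊆ Finset.Icc 1 l ∧ I.card ≤ k - c

lemma s6H.bounds {n k l c : ℕ} {I J : Finset ℕ} (H : s6H n k l c I J) :
    I.card ≤ l ∧ J.card ≤ l ∧ c + I.card ≤ k ∧ c + I.card + J.card ≤ k + l ∧ k + l < n := by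
  obtain ⟨hn, hk, hl, hst, hc, hI, hJ, hu⟩ := H
  have h1 := Finset.card_le_card hI
  have h2 := Finset.card_le_card hJ
  rw [Nat.card_Icc] at h1 h2
  omega

lemma s6H.svalI {n k l c : ℕ} {I J : Finset ℕ} (H : s6H n k l c I J) {a : ℕ}
    (ha : a < I.card) : 1 ≤ sval I a ∧ sval I a ≤ l :=
  Finset.mem_Icc.1 (H.2.2.2.2.2.1 (sval_mem ha))

lemma s6H.svalJ {n k l c : ℕ} {I J : Finset ℕ} (H : s6H n k l c I J) {a : ℕ}
    (ha : a < J.card) : 1 ≤ sval J a ∧ sval J a ≤ l :=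
  Finset.mem_Icc.1 (H.2.2.2.2.2.2.1 (sval_mem ha))

lemma s6H.svalI_lt {n k l c : ℕ} {I J : Finset ℕ} (H : s6H n k l c I J) {a : ℕ}
    (ha : a < I.card) : sval I a - 1 < l := by have := H.svalI ha; omega

lemma s6H.svalJ_lt {n k l c : ℕ} {I J : Finset ℕ} (H : s6H n k l c I J) {a : ℕ}
    (ha : a < J.card) : sval J a - 1 < l := by have := H.svalJ ha; omega

/-- The variable sitting at position `(a,b)` of the matrix of `η_{(c,I,J)}` (0-based). -/
def wvar (n k l c : ℕ) (I J : Finset ℕ) (H : s6H n k l c I J) (a b : ℕ) : VarIdx n k l :=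
  if h : a < c + J.card ∧ b < c + I.card ∧ a < n ∧ b < k then
    Sum.inl (⟨a, h.2.2.1⟩, ⟨b, h.2.2.2⟩)
  else if h : a < c + J.card ∧ c + I.card ≤ b ∧ a < n ∧ sval J (b - (c + I.card)) - 1 < l then
    Sum.inr (Sum.inl (⟨a, h.2.2.1⟩, ⟨sval J (b - (c + I.card)) - 1, h.2.2.2⟩))
  else if h : c + J.card ≤ a ∧ b < c + I.card ∧ b < k ∧ sval I (a - (c + J.card)) - 1 < l then
    Sum.inr (Sum.inr (Sum.inl (⟨b, h.2.2.1⟩, ⟨sval I (a - (c + J.card)) - 1, h.2.2.2⟩)))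
  else Sum.inl (⟨0, H.1⟩, ⟨0, H.2.1⟩)

lemma wvar_x {n k l c : ℕ} {I J : Finset ℕ} (H : s6H n k l c I J) {a b : ℕ}
    (ha2 : a < n) (hb2 : b < k) (ha : a < c + J.card) (hb : b < c + I.card) :
    wvar n k l c I J H a b = Sum.inl (⟨a, ha2⟩, ⟨b, hb2⟩) := by
  unfold wvar
  rw [dif_pos ⟨ha, hb, ha2, hb2⟩]

lemma wvar_y {n k l c : ℕ} {I J : Finset ℕ} (H : s6H n k l c I J) {a x : ℕ}
    (ha2 : a < n) (hy : sval J x - 1 < l) (ha : a < c + J.card) (hx : x < J.card) :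
    wvar n k l c I J H a (c + I.card + x) =
      Sum.inr (Sum.inl (⟨a, ha2⟩, ⟨sval J x - 1, hy⟩)) := by
  unfold wvar
  rw [dif_neg (by rintro ⟨-, h, -⟩; omega)]
  simp only [Nat.add_sub_cancel_left]
  rw [dif_pos ⟨ha, by omega, ha2, hy⟩]

lemma wvar_r {n k l c : ℕ} {I J : Finset ℕ} (H : s6H n k l c I J) {x b : ℕ}
    (hb2 : b < k) (hr : sval I x - 1 < l) (hx : x < I.card) (hb : b < c + I.card) :
    wvar n k l c I J H (c + J.card + x) b =
      Sum.inr (Sum.inr (Sum.inl (⟨b, hb2⟩, ⟨sval I x - 1, hr⟩))) := by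
  unfold wvar
  rw [dif_neg (by rintro ⟨h, -⟩; omega), dif_neg (by rintro ⟨h, -⟩; omega)]
  simp only [Nat.add_sub_cancel_left]
  rw [dif_pos ⟨by omega, hb, hb2, hr⟩]

lemma wvar_inj {n k l c : ℕ} {I J : Finset ℕ} (H : s6H n k l c I J) {a b a' b' : ℕ}
    (haN : a < c + I.card + J.card) (hbN : b < c + I.card + J.card)
    (ha'N : a' < c + I.card + J.card) (hb'N : b' < c + I.card + J.card)
    (hv : a < c + J.card ∨ b < c + I.card) (hv' : a' < c + J.card ∨ b' < c + I.card)
    (heq : wvar n k l c I J H a b = wvar n k l c I J H a' b') : a = a' ∧ b = b' := by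
  obtain ⟨hIc, hJc, hcu, hNkl, hkn⟩ := H.bounds
  by_cases h1 : a < c + J.card
  · by_cases h2 : b < c + I.card
    · rw [wvar_x H (by omega) (by omega) h1 h2] at heq
      by_cases h1' : a' < c + J.card
      · by_cases h2' : b' < c + I.card
        · rw [wvar_x H (by omega) (by omega) h1' h2'] at heq
          simpa using heq
        · obtain ⟨x', hbx', hx'⟩ : ∃ x, b' = c + I.card + x ∧ x < J.card :=
            ⟨b' - (c + I.card), by omega, by omega⟩
          subst hbx'
          rw [wvar_y H (by omega) (H.svalJ_lt hx') h1' hx'] at heq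
          simp at heq
      · obtain ⟨x', hax', hx'⟩ : ∃ x, a' = c + J.card + x ∧ x < I.card :=
          ⟨a' - (c + J.card), by omega, by omega⟩
        have h2' : b' < c + I.card := by omega
        subst hax'
        rw [wvar_r H (by omega) (H.svalI_lt hx') hx' h2'] at heq
        simp at heq
    · obtain ⟨x, hbx, hx⟩ : ∃ x, b = c + I.card + x ∧ x < J.card :=
        ⟨b - (c + I.card), by omega, by omega⟩
      subst hbx
      rw [wvar_y H (by omega) (H.svalJ_lt hx) h1 hx] at heq
      by_cases h1' : a' < c + J.card
      · by_cases h2' : b' < c + I.card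
        · rw [wvar_x H (by omega) (by omega) h1' h2'] at heq
          simp at heq
        · obtain ⟨x', hbx', hx'⟩ : ∃ x, b' = c + I.card + x ∧ x < J.card :=
            ⟨b' - (c + I.card), by omega, by omega⟩
          subst hbx'
          rw [wvar_y H (by omega) (H.svalJ_lt hx') h1' hx'] at heq
          simp only [Sum.inr.injEq, Sum.inl.injEq, Prod.mk.injEq, Fin.mk.injEq] at heq
          obtain ⟨hav, hsv⟩ := heq
          have hJ1 := H.svalJ hx
          have hJ1' := H.svalJ hx'
          have hxe : x = x' := sval_inj hx hx' (by omega)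
          omega
      · obtain ⟨x', hax', hx'⟩ : ∃ x, a' = c + J.card + x ∧ x < I.card :=
          ⟨a' - (c + J.card), by omega, by omega⟩
        have h2' : b' < c + I.card := by omega
        subst hax'
        rw [wvar_r H (by omega) (H.svalI_lt hx') hx' h2'] at heq
        simp at heq
  · obtain ⟨x, hax, hx⟩ : ∃ x, a = c + J.card + x ∧ x < I.card :=
      ⟨a - (c + J.card), by omega, by omega⟩
    have h2 : b < c + I.card := by omega
    subst hax
    rw [wvar_r H (by omega) (H.svalI_lt hx) hx h2] at heq
    by_cases h1' : a' < c + J.card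
    · by_cases h2' : b' < c + I.card
      · rw [wvar_x H (by omega) (by omega) h1' h2'] at heq
        simp at heq
      · obtain ⟨x', hbx', hx'⟩ : ∃ x, b' = c + I.card + x ∧ x < J.card :=
          ⟨b' - (c + I.card), by omega, by omega⟩
        subst hbx'
        rw [wvar_y H (by omega) (H.svalJ_lt hx') h1' hx'] at heq
        simp at heq
    · obtain ⟨x', hax', hx'⟩ : ∃ x, a' = c + J.card + x ∧ x < I.card :=
        ⟨a' - (c + J.card), by omega, by omega⟩
      have h2' : b' < c + I.card := by omega
      subst hax'
      rw [wvar_r H (by omega) (H.svalI_lt hx') hx' h2'] at heq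
      simp only [Sum.inr.injEq, Sum.inl.injEq, Prod.mk.injEq, Fin.mk.injEq] at heq
      obtain ⟨hbv, hsv⟩ := heq
      have hI1 := H.svalI hx
      have hI1' := H.svalI hx'
      have hxe : x = x' := sval_inj hx hx' (by omega)
      omega

/-- The permutation giving the leading monomial. -/
def perm0 (c u v : ℕ) : Equiv.Perm (Fin (c + u + v)) where
  toFun i := ⟨if i.1 < c then i.1 else if i.1 < c + v then i.1 + u else i.1 - v, by
    have := i.2; split_ifs <;> omega⟩
  invFun j := ⟨if j.1 < c then j.1 else if j.1 < c + u then j.1 + v else j.1 - u, by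
    have := j.2; split_ifs <;> omega⟩
  left_inv i := by
    have := i.2
    ext
    dsimp only
    split_ifs <;> omega
  right_inv j := by
    have := j.2
    ext
    dsimp only
    split_ifs <;> omega

lemma perm0_apply (c u v : ℕ) (i : Fin (c + u + v)) :
    ((perm0 c u v i : Fin (c + u + v)) : ℕ) =
      if i.1 < c then i.1 else if i.1 < c + v then i.1 + u else i.1 - v := rfl

/-- Validity of a permutation: the zero block of the matrix is avoided. -/
def s6valid (c : ℕ) (I J : Finset ℕ) (σ : Equiv.Perm (Fin (c + I.card + J.card))) : Prop :=
  ∀ i : Fin (c + I.card + J.card), c + J.card ≤ i.1 → ((σ i : Fin _) : ℕ) < c + I.card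

lemma perm0_valid (c : ℕ) (I J : Finset ℕ) : s6valid c I J (perm0 c I.card J.card) := by
  intro i hi
  have := i.2
  rw [perm0_apply]
  split_ifs <;> omega

lemma pos_ok {c : ℕ} {I J : Finset ℕ} (σ : Equiv.Perm (Fin (c + I.card + J.card)))
    (hσ : s6valid c I J σ) (i : Fin (c + I.card + J.card)) :
    i.1 < c + J.card ∨ ((σ i : Fin _) : ℕ) < c + I.card := by
  by_cases h : i.1 < c + J.card
  · exact Or.inl h
  · exact Or.inr (hσ i (le_of_not_gt h))

/-- Membership of a variable in the monomial of `σ`. -/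
def memv (n k l c : ℕ) (I J : Finset ℕ) (H : s6H n k l c I J)
    (σ : Equiv.Perm (Fin (c + I.card + J.card))) (d : VarIdx n k l) : Prop :=
  ∃ i : Fin (c + I.card + J.card), wvar n k l c I J H i.1 ((σ i : Fin _) : ℕ) = d

/-- The exponent vector of the monomial of `σ`. -/
def eexp (n k l c : ℕ) (I J : Finset ℕ) (H : s6H n k l c I J)
    (σ : Equiv.Perm (Fin (c + I.card + J.card))) : VarIdx n k l →₀ ℕ :=
  ∑ i : Fin (c + I.card + J.card), Finsupp.single (wvar n k l c I J H i.1 ((σ i : Fin _) : ℕ)) 1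

lemma wvar_comp_inj {n k l c : ℕ} {I J : Finset ℕ} (H : s6H n k l c I J)
    {σ : Equiv.Perm (Fin (c + I.card + J.card))} (hσ : s6valid c I J σ) :
    Function.Injective fun i : Fin (c + I.card + J.card) =>
      wvar n k l c I J H i.1 ((σ i : Fin _) : ℕ) := by
  intro i j h
  have h2 := wvar_inj H i.2 (σ i).2 j.2 (σ j).2 (pos_ok σ hσ i) (pos_ok σ hσ j) h
  exact Fin.ext h2.1

lemma eexp_apply_one {n k l c : ℕ} {I J : Finset ℕ} (H : s6H n k l c I J)
    {σ : Equiv.Perm (Fin (c + I.card + J.card))} (hσ : s6valid c I J σ)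
    {d : VarIdx n k l} (hd : memv n k l c I J H σ d) : eexp n k l c I J H σ d = 1 := by
  obtain ⟨i0, hi0⟩ := hd
  rw [eexp, Finset.sum_apply']
  rw [Finset.sum_eq_single i0]
  · rw [hi0, Finsupp.single_eq_same]
  · intro j _ hj
    exact Finsupp.single_eq_of_ne' fun h =>
      hj (wvar_comp_inj H hσ (h.trans hi0.symm))
  · intro h; exact absurd (Finset.mem_univ i0) h

lemma eexp_apply_zero {n k l c : ℕ} {I J : Finset ℕ} (H : s6H n k l c I J)
    {σ : Equiv.Perm (Fin (c + I.card + J.card))}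
    {d : VarIdx n k l} (hd : ¬ memv n k l c I J H σ d) : eexp n k l c I J H σ d = 0 := by
  rw [eexp, Finset.sum_apply']
  refine Finset.sum_eq_zero fun i _ => ?_
  exact Finsupp.single_eq_of_ne' fun h => hd ⟨i, h⟩

lemma memv_of_ne_zero {n k l c : ℕ} {I J : Finset ℕ} (H : s6H n k l c I J)
    {σ : Equiv.Perm (Fin (c + I.card + J.card))}
    {d : VarIdx n k l} (hd : eexp n k l c I J H σ d ≠ 0) : memv n k l c I J H σ d := by
  by_contra h
  exact hd (eexp_apply_zero H h)

lemma s6hlp {n q1 q2 r1 r2 : ℕ} (h : q1 < q2) (hr : r1 < n) : q1 * n + r1 < q2 * n + r2 :=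
  calc q1 * n + r1 < q1 * n + n := by omega
    _ = (q1 + 1) * n := by ring
    _ ≤ q2 * n := Nat.mul_le_mul_right n h
    _ ≤ q2 * n + r2 := Nat.le_add_right _ _

lemma s6card_filter (N : ℕ) (p : ℕ → Prop) [DecidablePred p] :
    (Finset.univ.filter (fun j : Fin N => p j.1)).card =
      ((Finset.range N).filter p).card := by
  rw [Finset.card_filter, Finset.card_filter]
  exact Fin.sum_univ_eq_sum_range (fun j => if p j then 1 else 0) N

lemma mdeg_add {n k l : ℕ} (α β : VarIdx n k l →₀ ℕ) : mdeg (α + β) = mdeg α + mdeg β :=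
  Finsupp.sum_add_index' (fun _ => rfl) (fun _ _ _ => rfl)

lemma mdeg_sum {n k l : ℕ} {ι : Type*} (s : Finset ι) (f : ι → (VarIdx n k l →₀ ℕ)) :
    mdeg (∑ i ∈ s, f i) = ∑ i ∈ s, mdeg (f i) := by
  classical
  induction s using Finset.induction_on with
  | empty => simp [mdeg, Finsupp.sum_zero_index]
  | insert _ _ hx ih => rw [Finset.sum_insert hx, Finset.sum_insert hx, mdeg_add, ih]

lemma mdeg_single {n k l : ℕ} (v : VarIdx n k l) : mdeg (Finsupp.single v (1 : ℕ)) = 1 :=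
  Finsupp.sum_single_index rfl

lemma mdeg_eexp {n k l c : ℕ} {I J : Finset ℕ} (H : s6H n k l c I J)
    (σ : Equiv.Perm (Fin (c + I.card + J.card))) :
    mdeg (eexp n k l c I J H σ) = c + I.card + J.card := by
  rw [eexp, mdeg_sum]
  simp [mdeg_single]

lemma prod_X_eq {n k l : ℕ} {ι : Type*} (s : Finset ι) (f : ι → VarIdx n k l) :
    (∏ i ∈ s, (X (f i) : PRing n k l)) =
      monomial (∑ i ∈ s, Finsupp.single (f i) 1) (1 : ℂ) := by
  classical
  induction s using Finset.induction_on with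
  | empty => simp
  | insert _ _ hx ih =>
    rw [Finset.prod_insert hx, Finset.sum_insert hx, ih,
      show (X (f _) : PRing n k l) = monomial (Finsupp.single (f _) 1) 1 from rfl,
      MvPolynomial.monomial_mul, one_mul]

/-- The matrix whose determinant is `η_{(c,I,J)}`. -/
def s6mat (n k l : ℕ) (c : ℕ) (I J : Finset ℕ) :
    Matrix (Fin (c + I.card + J.card)) (Fin (c + I.card + J.card)) (PRing n k l) :=
  Matrix.of fun a b : Fin (c + I.card + J.card) =>
    if a.val < c + J.card then
      if b.val < c + I.card then xP n k l (a.val + 1) (b.val + 1)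
      else yP n k l (a.val + 1) ((J.sort (· ≤ ·)).getD (b.val - (c + I.card)) 0)
    else
      if b.val < c + I.card then
        rP n k l (b.val + 1) ((I.sort (· ≤ ·)).getD (a.val - (c + J.card)) 0)
      else 0

lemma eta_eq_det (n k l c : ℕ) (I J : Finset ℕ) :
    eta n k l c I J = (s6mat n k l c I J).det := rfl

lemma s6mat_x {n k l c : ℕ} {I J : Finset ℕ} (H : s6H n k l c I J)
    {a b : Fin (c + I.card + J.card)} (ha : a.1 < c + J.card) (hb : b.1 < c + I.card) :
    s6mat n k l c I J a b = X (wvar n k l c I J H a.1 b.1) := by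
  obtain ⟨hIc, hJc, hcu, hNkl, hkn⟩ := H.bounds
  rw [s6mat, Matrix.of_apply, if_pos ha, if_pos hb,
    wvar_x H (by omega) (by omega) ha hb]
  unfold xP
  rw [dif_pos ⟨by omega, by omega, by omega, by omega⟩]
  rfl

lemma s6mat_y {n k l c : ℕ} {I J : Finset ℕ} (H : s6H n k l c I J)
    {a b : Fin (c + I.card + J.card)} (ha : a.1 < c + J.card) (hb : c + I.card ≤ b.1) :
    s6mat n k l c I J a b = X (wvar n k l c I J H a.1 b.1) := by
  obtain ⟨hIc, hJc, hcu, hNkl, hkn⟩ := H.bounds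
  obtain ⟨x, hbx, hx⟩ : ∃ x, b.1 = c + I.card + x ∧ x < J.card :=
    ⟨b.1 - (c + I.card), by omega, by have := b.2; omega⟩
  have hs := H.svalJ hx
  rw [s6mat, Matrix.of_apply, if_pos ha, if_neg (not_lt.2 hb), hbx,
    wvar_y H (by omega) (H.svalJ_lt hx) ha hx]
  simp only [Nat.add_sub_cancel_left]
  unfold yP
  rw [dif_pos ⟨by omega, by omega, hs.1, hs.2⟩]
  rfl

lemma s6mat_r {n k l c : ℕ} {I J : Finset ℕ} (H : s6H n k l c I J)
    {a b : Fin (c + I.card + J.card)} (ha : c + J.card ≤ a.1) (hb : b.1 < c + I.card) :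
    s6mat n k l c I J a b = X (wvar n k l c I J H a.1 b.1) := by
  obtain ⟨hIc, hJc, hcu, hNkl, hkn⟩ := H.bounds
  obtain ⟨x, hax, hx⟩ : ∃ x, a.1 = c + J.card + x ∧ x < I.card :=
    ⟨a.1 - (c + J.card), by omega, by have := a.2; omega⟩
  have hs := H.svalI hx
  rw [s6mat, Matrix.of_apply, if_neg (not_lt.2 ha), if_pos hb, hax,
    wvar_r H (by omega) (H.svalI_lt hx) hx hb]
  simp only [Nat.add_sub_cancel_left]
  unfold rP
  rw [dif_pos ⟨by omega, by omega, hs.1, hs.2⟩]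
  rfl

lemma s6mat_zero {n k l c : ℕ} {I J : Finset ℕ}
    {a b : Fin (c + I.card + J.card)} (ha : c + J.card ≤ a.1) (hb : c + I.card ≤ b.1) :
    s6mat n k l c I J a b = 0 := by
  rw [s6mat, Matrix.of_apply, if_neg (not_lt.2 ha), if_neg (not_lt.2 hb)]

lemma term_valid {n k l c : ℕ} {I J : Finset ℕ} (H : s6H n k l c I J)
    {σ : Equiv.Perm (Fin (c + I.card + J.card))} (hσ : s6valid c I J σ) :
    (∏ i : Fin (c + I.card + J.card), s6mat n k l c I J i (σ i)) =
      monomial (eexp n k l c I J H σ) 1 := by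
  rw [show (∏ i : Fin (c + I.card + J.card), s6mat n k l c I J i (σ i)) =
      ∏ i : Fin (c + I.card + J.card), (X (wvar n k l c I J H i.1 ((σ i : Fin _) : ℕ)) :
        PRing n k l) from Finset.prod_congr rfl fun i _ => ?_, prod_X_eq]
  · rfl
  · by_cases hi : i.1 < c + J.card
    · by_cases hb : ((σ i : Fin _) : ℕ) < c + I.card
      · exact s6mat_x H hi hb
      · exact s6mat_y H hi (le_of_not_gt hb)
    · exact s6mat_r H (le_of_not_gt hi) (hσ i (le_of_not_gt hi))

lemma term_invalid {n k l c : ℕ} {I J : Finset ℕ}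
    {σ : Equiv.Perm (Fin (c + I.card + J.card))} (hσ : ¬ s6valid c I J σ) :
    (∏ i : Fin (c + I.card + J.card), s6mat n k l c I J i (σ i)) = 0 := by
  rw [s6valid] at hσ
  push_neg at hσ
  obtain ⟨i, hi1, hi2⟩ := hσ
  exact Finset.prod_eq_zero (Finset.mem_univ i) (s6mat_zero hi1 hi2)

lemma s6key {n k l c : ℕ} {I J : Finset ℕ} (H : s6H n k l c I J)
    (σ : Equiv.Perm (Fin (c + I.card + J.card))) (hσ : s6valid c I J σ)
    (d : VarIdx n k l)
    (hag : ∀ e, vrank n k l e < vrank n k l d →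
      (memv n k l c I J H σ e ↔ memv n k l c I J H (perm0 c I.card J.card) e))
    (hd : memv n k l c I J H σ d) : memv n k l c I J H (perm0 c I.card J.card) d := by
  obtain ⟨hIc, hJc, hcu, hNkl, hkn⟩ := H.bounds
  by_contra hns
  obtain ⟨i, hi⟩ := hd
  have dec : ∀ (t t' : ℕ) (htn : t < c + I.card + J.card), t' < c + I.card + J.card →
      (t < c + J.card ∨ t' < c + I.card) →
      memv n k l c I J H σ (wvar n k l c I J H t t') →
        ((σ ⟨t, htn⟩ : Fin _) : ℕ) = t' := by
    intro t t' htn ht' hvp hm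
    obtain ⟨j', hj'⟩ := hm
    have h2 := wvar_inj H j'.2 (σ j').2 htn ht' (pos_ok σ hσ j') hvp hj'
    have hj2 : j' = ⟨t, htn⟩ := Fin.ext h2.1
    rw [← hj2]
    exact h2.2
  have mem0x : ∀ t, t < c → memv n k l c I J H (perm0 c I.card J.card)
      (wvar n k l c I J H t t) := by
    intro t ht
    refine ⟨⟨t, by omega⟩, ?_⟩
    have hp : ((perm0 c I.card J.card ⟨t, by omega⟩ : Fin _) : ℕ) = t := by
      rw [perm0_apply]; dsimp only; rw [if_pos ht]
    rw [hp]
  have mem0y : ∀ x, x < J.card → memv n k l c I J H (perm0 c I.card J.card)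
      (wvar n k l c I J H (c + x) (c + I.card + x)) := by
    intro x hx
    refine ⟨⟨c + x, by omega⟩, ?_⟩
    have hp : ((perm0 c I.card J.card ⟨c + x, by omega⟩ : Fin _) : ℕ)
        = c + I.card + x := by
      rw [perm0_apply]; dsimp only; rw [if_neg (by omega), if_pos (by omega)]; omega
    rw [hp]
  have mem0r : ∀ x, x < I.card → memv n k l c I J H (perm0 c I.card J.card)
      (wvar n k l c I J H (c + J.card + x) (c + x)) := by
    intro x hx
    refine ⟨⟨c + J.card + x, by omega⟩, ?_⟩
    have hp : ((perm0 c I.card J.card ⟨c + J.card + x, by omega⟩ : Fin _) : ℕ) = c + x := by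
      rw [perm0_apply]; dsimp only; rw [if_neg (by omega), if_neg (by omega)]; omega
    rw [hp]
  by_cases hi1 : (i : ℕ) < c + J.card
  · by_cases hi2 : ((σ i : Fin _) : ℕ) < c + I.card
    · -- Case X : the variable of row i is an x-variable
      rw [wvar_x H (by omega) (by omega) hi1 hi2] at hi
      subst hi
      by_cases hA : c ≤ ((σ i : Fin _) : ℕ)
      · -- the column of the x-variable is ≥ c : pigeonhole contradiction
        have hfix : ∀ t (htn : t < c + I.card + J.card), t < c →
            ((σ ⟨t, htn⟩ : Fin _) : ℕ) = t := by
          intro t htn ht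
          refine dec t t htn (by omega) (Or.inl (by omega)) ((hag _ ?_).2 (mem0x t ht))
          rw [wvar_x H (by omega) (by omega) (by omega) (by omega)]
          simp only [vrank]
          exact s6hlp (by omega) (by omega)
        have hTC : Finset.image σ (Finset.univ.filter
              (fun j : Fin (c + I.card + J.card) => c + J.card ≤ j.1)) =
            Finset.univ.filter (fun j : Fin (c + I.card + J.card) =>
              c ≤ j.1 ∧ j.1 < c + I.card) := by
          apply Finset.eq_of_subset_of_card_le
          · intro x hx
            simp only [Finset.mem_image, Finset.mem_filter] at hx ⊢
            obtain ⟨j, ⟨-, hj⟩, rfl⟩ := hx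
            refine ⟨Finset.mem_univ _, ?_, hσ j hj⟩
            by_contra hlt
            push_neg at hlt
            have h1 := hfix ((σ j : Fin _) : ℕ) (by omega) hlt
            have h2 : σ ⟨((σ j : Fin _) : ℕ), by omega⟩ = σ j := Fin.ext h1
            have h3 := σ.injective h2
            have h4 : ((σ j : Fin _) : ℕ) = (j : ℕ) := congrArg Fin.val h3
            omega
          · rw [Finset.card_image_of_injective _ σ.injective,
              s6card_filter (c + I.card + J.card) (fun j => c + J.card ≤ j),
              s6card_filter (c + I.card + J.card) (fun j => c ≤ j ∧ j < c + I.card),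
              show (Finset.range (c + I.card + J.card)).filter
                  (fun j => c ≤ j ∧ j < c + I.card) = Finset.Ico c (c + I.card) from by
                ext x; simp only [Finset.mem_filter, Finset.mem_range, Finset.mem_Ico]; omega,
              show (Finset.range (c + I.card + J.card)).filter (fun j => c + J.card ≤ j)
                  = Finset.Ico (c + J.card) (c + I.card + J.card) from by
                ext x; simp only [Finset.mem_filter, Finset.mem_range, Finset.mem_Ico]; omega,
              Nat.card_Ico, Nat.card_Ico]
            omega
        have hmemC : σ i ∈ Finset.univ.filter (fun j : Fin (c + I.card + J.card) =>
            c ≤ j.1 ∧ j.1 < c + I.card) := by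
          simp only [Finset.mem_filter]
          exact ⟨Finset.mem_univ _, hA, hi2⟩
        rw [← hTC] at hmemC
        simp only [Finset.mem_image, Finset.mem_filter] at hmemC
        obtain ⟨j, ⟨-, hj⟩, hj2⟩ := hmemC
        have h3 := σ.injective hj2
        have h4 : (j : ℕ) = (i : ℕ) := congrArg Fin.val h3
        omega
      · push_neg at hA
        rcases lt_trichotomy ((σ i : Fin _) : ℕ) (i : ℕ) with hB | hE | hC
        · -- column < row, column < c
          have h1 : ((σ ⟨((σ i : Fin _) : ℕ), by omega⟩ : Fin _) : ℕ)
              = ((σ i : Fin _) : ℕ) := by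
            refine dec ((σ i : Fin _) : ℕ) _ (by omega) (by omega) (Or.inl (by omega))
              ((hag _ ?_).2 (mem0x _ hA))
            rw [wvar_x H (by omega) (by omega) (by omega) (by omega)]
            simp only [vrank]
            exact Nat.add_lt_add_left hB _
          have h2 : σ ⟨((σ i : Fin _) : ℕ), by omega⟩ = σ i := Fin.ext h1
          have h3 := σ.injective h2
          have h4 : ((σ i : Fin _) : ℕ) = (i : ℕ) := congrArg Fin.val h3
          omega
        · -- diagonal entry : contradiction with hns
          apply hns
          have hmm := mem0x (i : ℕ) (by omega)
          rw [wvar_x H (by omega) (by omega) (by omega) (by omega)] at hmm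
          simp only [hE]
          exact hmm
        · -- row < column < c
          have h1 : ((σ ⟨(i : ℕ), by omega⟩ : Fin _) : ℕ) = (i : ℕ) := by
            refine dec (i : ℕ) _ (by omega) (by omega) (Or.inl (by omega))
              ((hag _ ?_).2 (mem0x _ (by omega)))
            rw [wvar_x H (by omega) (by omega) (by omega) (by omega)]
            simp only [vrank]
            exact s6hlp hC (by omega)
          have h2 : ((σ i : Fin _) : ℕ) = (i : ℕ) := h1
          omega
    · -- Case Y : the variable of row i is a y-variable
      have hy2 : c + I.card ≤ ((σ i : Fin _) : ℕ) := le_of_not_gt hi2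
      obtain ⟨b', hb'eq, hb'⟩ : ∃ x, ((σ i : Fin _) : ℕ) = c + I.card + x ∧ x < J.card :=
        ⟨((σ i : Fin _) : ℕ) - (c + I.card), by omega, by have := (σ i).2; omega⟩
      rw [hb'eq, wvar_y H (by omega) (H.svalJ_lt hb') hi1 hb'] at hi
      subst hi
      have hfix : ∀ t (htn : t < c + I.card + J.card), t < c →
          ((σ ⟨t, htn⟩ : Fin _) : ℕ) = t := by
        intro t htn ht
        refine dec t t htn (by omega) (Or.inl (by omega)) ((hag _ ?_).2 (mem0x t ht))
        rw [wvar_x H (by omega) (by omega) (by omega) (by omega)]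
        simp only [vrank]
        have h8 : t * n + t < k * n + 0 := s6hlp (by omega) (by omega)
        have h9 : k * n = n * k := Nat.mul_comm k n
        have h10 : t * n + t < n * k := by linarith
        have h11 : n * k ≤ n * k + (sval J b' - 1) * n + (i : ℕ) :=
          le_trans (Nat.le_add_right _ _) (Nat.le_add_right _ _)
        linarith
      have hic : c ≤ (i : ℕ) := by
        by_contra hlt
        push_neg at hlt
        have h1 : ((σ i : Fin _) : ℕ) = (i : ℕ) := hfix (i : ℕ) i.2 hlt
        omega
      obtain ⟨a, hieq, hav⟩ : ∃ x, (i : ℕ) = c + x ∧ x < J.card :=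
        ⟨(i : ℕ) - c, by omega, by omega⟩
      have hne2 : a ≠ b' := by
        intro h
        subst h
        apply hns
        have hmm := mem0y a hav
        rw [wvar_y H (by omega) (H.svalJ_lt hav) (by omega) hav] at hmm
        simp only [hieq]
        exact hmm
      rcases lt_or_gt_of_ne hne2 with hab | hab
      · -- a < b'
        have h1 : ((σ i : Fin _) : ℕ) = c + I.card + a := by
          refine dec (i : ℕ) (c + I.card + a) i.2 (by omega) (Or.inl (by omega)) ?_
          rw [show (i : ℕ) = c + a from hieq]
          refine (hag _ ?_).2 (mem0y a hav)
          rw [wvar_y H (by omega) (H.svalJ_lt hav) (by omega) hav]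
          simp only [vrank]
          have hsv := sval_strict hab hb'
          have hsv1 := H.svalJ hav
          have h9 : (sval J a - 1) * n + (c + a) < (sval J b' - 1) * n + (c + a) :=
            s6hlp (by omega) (by omega)
          have h10 : (i : ℕ) = c + a := hieq
          linarith
        omega
      · -- b' < a
        have h1 : ((σ ⟨c + b', by omega⟩ : Fin _) : ℕ) = c + I.card + b' := by
          refine dec (c + b') (c + I.card + b') (by omega) (by omega) (Or.inl (by omega)) ?_
          refine (hag _ ?_).2 (mem0y b' hb')
          rw [wvar_y H (by omega) (H.svalJ_lt hb') (by omega) hb']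
          simp only [vrank]
          have h10 : (i : ℕ) = c + a := hieq
          linarith
        have h2 : σ ⟨c + b', by omega⟩ = σ i := Fin.ext (h1.trans hb'eq.symm)
        have h3 := σ.injective h2
        have h4 : c + b' = (i : ℕ) := congrArg Fin.val h3
        omega
  · -- Case R : the variable of row i is an r-variable
    have hirow : c + J.card ≤ (i : ℕ) := le_of_not_gt hi1
    have hσi : ((σ i : Fin _) : ℕ) < c + I.card := hσ i hirow
    obtain ⟨a, hieq, hav⟩ : ∃ x, (i : ℕ) = c + J.card + x ∧ x < I.card :=
      ⟨(i : ℕ) - (c + J.card), by omega, by have := i.2; omega⟩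
    rw [show wvar n k l c I J H (i : ℕ) ((σ i : Fin _) : ℕ)
          = wvar n k l c I J H (c + J.card + a) ((σ i : Fin _) : ℕ) from by rw [← hieq],
      wvar_r H (by omega) (H.svalI_lt hav) hav hσi] at hi
    subst hi
    have hfix : ∀ t (htn : t < c + I.card + J.card), t < c →
        ((σ ⟨t, htn⟩ : Fin _) : ℕ) = t := by
      intro t htn ht
      refine dec t t htn (by omega) (Or.inl (by omega)) ((hag _ ?_).2 (mem0x t ht))
      rw [wvar_x H (by omega) (by omega) (by omega) (by omega)]
      simp only [vrank]
      have h8 : t * n + t < k * n + 0 := s6hlp (by omega) (by omega)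
      have h9 : k * n = n * k := Nat.mul_comm k n
      have h10 : t * n + t < n * k := by linarith
      have h11 : n * k ≤ n * k + n * l + (sval I a - 1) * k + ((σ i : Fin _) : ℕ) :=
        le_trans (le_trans (Nat.le_add_right _ _) (Nat.le_add_right _ _)) (Nat.le_add_right _ _)
      linarith
    have hc2 : c ≤ ((σ i : Fin _) : ℕ) := by
      by_contra hlt
      push_neg at hlt
      have h1 := hfix ((σ i : Fin _) : ℕ) (by omega) hlt
      have h2 : σ ⟨((σ i : Fin _) : ℕ), by omega⟩ = σ i := Fin.ext h1
      have h3 := σ.injective h2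
      have h4 : ((σ i : Fin _) : ℕ) = (i : ℕ) := congrArg Fin.val h3
      omega
    obtain ⟨b', hb'eq, hb'⟩ : ∃ x, ((σ i : Fin _) : ℕ) = c + x ∧ x < I.card :=
      ⟨((σ i : Fin _) : ℕ) - c, by omega, by omega⟩
    have hne2 : a ≠ b' := by
      intro h
      subst h
      apply hns
      have hmm := mem0r a hav
      rw [wvar_r H (by omega) (H.svalI_lt hav) hav (by omega)] at hmm
      simp only [hb'eq]
      exact hmm
    rcases lt_or_gt_of_ne hne2 with hab | hab
    · -- a < b'
      have h1 : ((σ i : Fin _) : ℕ) = c + a := by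
        refine dec (i : ℕ) (c + a) i.2 (by omega) (Or.inr (by omega)) ?_
        rw [show (i : ℕ) = c + J.card + a from hieq]
        refine (hag _ ?_).2 (mem0r a hav)
        rw [wvar_r H (by omega) (H.svalI_lt hav) hav (by omega)]
        simp only [vrank]
        have h10 : ((σ i : Fin _) : ℕ) = c + b' := hb'eq
        linarith
      omega
    · -- b' < a
      have h1 : ((σ ⟨c + J.card + b', by omega⟩ : Fin _) : ℕ) = c + b' := by
        refine dec (c + J.card + b') (c + b') (by omega) (by omega) (Or.inr (by omega)) ?_
        refine (hag _ ?_).2 (mem0r b' hb')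
        rw [wvar_r H (by omega) (H.svalI_lt hb') hb' (by omega)]
        simp only [vrank]
        have hsv := sval_strict hab hav
        have hsv1 := H.svalI hb'
        have h9 : (sval I b' - 1) * k + (c + b')
            < (sval I a - 1) * k + ((σ i : Fin _) : ℕ) := s6hlp (by omega) (by omega)
        linarith
      have h2 : σ ⟨c + J.card + b', by omega⟩ = σ i :=
        Fin.ext (by rw [h1, hb'eq])
      have h3 := σ.injective h2
      have h4 : c + J.card + b' = (i : ℕ) := congrArg Fin.val h3
      omega

lemma s6grlex {n k l c : ℕ} {I J : Finset ℕ} (H : s6H n k l c I J)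
    (σ : Equiv.Perm (Fin (c + I.card + J.card))) (hσ : s6valid c I J σ)
    (hne : eexp n k l c I J H σ ≠ eexp n k l c I J H (perm0 c I.card J.card)) :
    grlexLT n k l (eexp n k l c I J H σ) (eexp n k l c I J H (perm0 c I.card J.card)) := by
  classical
  have hv0 : s6valid c I J (perm0 c I.card J.card) := perm0_valid c I J
  set E1 := eexp n k l c I J H σ with hE1
  set E0 := eexp n k l c I J H (perm0 c I.card J.card) with hE0
  have hDnon : ((E1.support ∪ E0.support).filter fun e => E1 e ≠ E0 e).Nonempty := by
    obtain ⟨e, he⟩ := Finsupp.ne_iff.1 hne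
    refine ⟨e, Finset.mem_filter.2 ⟨?_, he⟩⟩
    by_cases h : E1 e = 0
    · exact Finset.mem_union_right _ (Finsupp.mem_support_iff.2 (fun hh => he (h.trans hh.symm)))
    · exact Finset.mem_union_left _ (Finsupp.mem_support_iff.2 h)
  obtain ⟨d, hdmem, hdmin⟩ := Finset.exists_min_image _ (vrank n k l) hDnon
  have hdne : E1 d ≠ E0 d := (Finset.mem_filter.1 hdmem).2
  have hagv : ∀ e, vrank n k l e < vrank n k l d → E1 e = E0 e := by
    intro e he
    by_contra hee
    have hmem : e ∈ (E1.support ∪ E0.support).filter fun e => E1 e ≠ E0 e := by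
      refine Finset.mem_filter.2 ⟨?_, hee⟩
      by_cases h : E1 e = 0
      · exact Finset.mem_union_right _ (Finsupp.mem_support_iff.2 (fun hh => hee (h.trans hh.symm)))
      · exact Finset.mem_union_left _ (Finsupp.mem_support_iff.2 h)
    exact absurd (hdmin e hmem) (by omega)
  have hag : ∀ e, vrank n k l e < vrank n k l d →
      (memv n k l c I J H σ e ↔ memv n k l c I J H (perm0 c I.card J.card) e) := by
    intro e he
    constructor
    · intro hm
      refine memv_of_ne_zero H ?_
      rw [← hE0, ← hagv e he, hE1, eexp_apply_one H hσ hm]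
      exact one_ne_zero
    · intro hm
      refine memv_of_ne_zero H ?_
      rw [← hE1, hagv e he, hE0, eexp_apply_one H hv0 hm]
      exact one_ne_zero
  have hmd : ¬ memv n k l c I J H σ d := by
    intro hm
    exact hdne (by rw [hE1, hE0, eexp_apply_one H hσ hm,
      eexp_apply_one H hv0 (s6key H σ hσ d hag hm)])
  have h0d : memv n k l c I J H (perm0 c I.card J.card) d := by
    refine memv_of_ne_zero H fun h0 => hdne ?_
    rw [hE1, eexp_apply_zero H hmd, hE0, h0]
  right
  refine ⟨by rw [hE1, hE0, mdeg_eexp, mdeg_eexp], d, ?_, hagv⟩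
  rw [hE1, hE0, eexp_apply_zero H hmd, eexp_apply_one H hv0 h0d]
  omega

lemma eexp_eq_perm0 {n k l c : ℕ} {I J : Finset ℕ} (H : s6H n k l c I J)
    (σ : Equiv.Perm (Fin (c + I.card + J.card))) (hσ : s6valid c I J σ)
    (h : eexp n k l c I J H σ = eexp n k l c I J H (perm0 c I.card J.card)) :
    σ = perm0 c I.card J.card := by
  have hv0 : s6valid c I J (perm0 c I.card J.card) := perm0_valid c I J
  apply Equiv.ext
  intro i
  have h1 : memv n k l c I J H σ (wvar n k l c I J H i.1 ((σ i : Fin _) : ℕ)) := ⟨i, rfl⟩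
  have h2 : eexp n k l c I J H (perm0 c I.card J.card)
      (wvar n k l c I J H i.1 ((σ i : Fin _) : ℕ)) = 1 := by
    rw [← h]
    exact eexp_apply_one H hσ h1
  have h3 := memv_of_ne_zero H (σ := perm0 c I.card J.card) (by rw [h2]; exact one_ne_zero)
  obtain ⟨j, hj⟩ := h3
  have h4 := wvar_inj H j.2 ((perm0 c I.card J.card) j).2 i.2 (σ i).2
    (pos_ok _ hv0 j) (pos_ok σ hσ i) hj
  have hji : j = i := Fin.ext h4.1
  rw [hji] at h4
  exact Fin.ext h4.2.symm

theorem statement_6 (n k l : ℕ) (hn : 0 < n) (hk : 0 < k) (hl : 0 < l)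
    (hst : 2 * (k + l) < n) (c : ℕ) (hc : c ≤ k) (I J : Finset ℕ)
    (hI : I ⊆ Finset.Icc 1 l) (hJ : J ⊆ Finset.Icc 1 l) (hu : I.card ≤ k - c) :
    eta n k l c I J ≠ 0 ∧
    ∃ α, IsLeadMon n k l (eta n k l c I J) α ∧
      MvPolynomial.monomial α (1 : ℂ) =
        (∏ a ∈ Finset.range c, xP n k l (a + 1) (a + 1))
        * (∏ a ∈ Finset.range J.card, yP n k l (c + a + 1) ((J.sort (· ≤ ·)).getD a 0))
        * (∏ a ∈ Finset.range I.card, rP n k l (c + a + 1) ((I.sort (· ≤ ·)).getD a 0)) := by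
  have H : s6H n k l c I J := ⟨hn, hk, hl, hst, hc, hI, hJ, hu⟩
  have hv0 : s6valid c I J (perm0 c I.card J.card) := perm0_valid c I J
  have hdet : eta n k l c I J =
      ∑ σ : Equiv.Perm (Fin (c + I.card + J.card)),
        ((Equiv.Perm.sign σ : ℤ) : PRing n k l) *
          ∏ i : Fin (c + I.card + J.card), s6mat n k l c I J i (σ i) := by
    rw [eta_eq_det, ← Matrix.det_transpose, Matrix.det_apply']
    rfl
  have hcoeff : ∀ β, MvPolynomial.coeff β (eta n k l c I J) =
      ∑ σ : Equiv.Perm (Fin (c + I.card + J.card)),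
        ((Equiv.Perm.sign σ : ℤ)) • MvPolynomial.coeff β
          (∏ i : Fin (c + I.card + J.card), s6mat n k l c I J i (σ i)) := by
    intro β
    rw [hdet, MvPolynomial.coeff_sum]
    refine Finset.sum_congr rfl fun σ _ => ?_
    rw [← zsmul_eq_mul, MvPolynomial.coeff_smul]
  have hc0 : MvPolynomial.coeff (eexp n k l c I J H (perm0 c I.card J.card))
      (eta n k l c I J) = ((Equiv.Perm.sign (perm0 c I.card J.card) : ℤ) : ℂ) := by
    rw [hcoeff]
    rw [Finset.sum_eq_single (perm0 c I.card J.card)]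
    · rw [term_valid H hv0, MvPolynomial.coeff_monomial, if_pos rfl, zsmul_eq_mul, mul_one]
    · intro σ _ hσne
      by_cases hv : s6valid c I J σ
      · rw [term_valid H hv, MvPolynomial.coeff_monomial,
          if_neg (fun he => hσne (eexp_eq_perm0 H σ hv he)), smul_zero]
      · rw [term_invalid hv, MvPolynomial.coeff_zero, smul_zero]
    · intro hmem
      exact absurd (Finset.mem_univ _) hmem
  have hcne : MvPolynomial.coeff (eexp n k l c I J H (perm0 c I.card J.card))
      (eta n k l c I J) ≠ 0 := by
    rw [hc0]
    rcases Int.units_eq_one_or (Equiv.Perm.sign (perm0 c I.card J.card)) with h | h <;>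
      simp [h]
  have hsupp : eexp n k l c I J H (perm0 c I.card J.card) ∈ (eta n k l c I J).support :=
    MvPolynomial.mem_support_iff.2 hcne
  have hη : eta n k l c I J ≠ 0 := fun h0 => hcne (by rw [h0, MvPolynomial.coeff_zero])
  refine ⟨hη, eexp n k l c I J H (perm0 c I.card J.card), ⟨hsupp, ?_⟩, ?_⟩
  · -- every other monomial of the support is smaller
    intro β hβ hβne
    have hβc := MvPolynomial.mem_support_iff.1 hβ
    have hex : ∃ σ : Equiv.Perm (Fin (c + I.card + J.card)),
        s6valid c I J σ ∧ eexp n k l c I J H σ = β := by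
      by_contra hcon
      push_neg at hcon
      apply hβc
      rw [hcoeff]
      refine Finset.sum_eq_zero fun σ _ => ?_
      by_cases hv : s6valid c I J σ
      · rw [term_valid H hv, MvPolynomial.coeff_monomial, if_neg (hcon σ hv), smul_zero]
      · rw [term_invalid hv, MvPolynomial.coeff_zero, smul_zero]
    obtain ⟨σ, hv, hβeq⟩ := hex
    subst hβeq
    exact s6grlex H σ hv hβne
  · -- identification of the leading monomial
    obtain ⟨hIc, hJc, hcu, hNkl, hkn⟩ := H.bounds
    have hxf : ∀ a, a < c → xP n k l (a + 1) (a + 1)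
        = X (wvar n k l c I J H a a) := by
      intro a ha
      rw [wvar_x H (by omega) (by omega) (by omega) (by omega)]
      unfold xP
      rw [dif_pos ⟨by omega, by omega, by omega, by omega⟩]
      rfl
    have hyf : ∀ a, a < J.card → yP n k l (c + a + 1) ((J.sort (· ≤ ·)).getD a 0)
        = X (wvar n k l c I J H (c + a) (c + I.card + a)) := by
      intro a ha
      have hs := H.svalJ ha
      rw [wvar_y H (by omega) (H.svalJ_lt ha) (by omega) ha]
      unfold yP
      rw [dif_pos ⟨by omega, by omega, hs.1, hs.2⟩]
      rfl
    have hrf : ∀ a, a < I.card → rP n k l (c + a + 1) ((I.sort (· ≤ ·)).getD a 0)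
        = X (wvar n k l c I J H (c + J.card + a) (c + a)) := by
      intro a ha
      have hs := H.svalI ha
      rw [wvar_r H (by omega) (H.svalI_lt ha) ha (by omega)]
      unfold rP
      rw [dif_pos ⟨by omega, by omega, hs.1, hs.2⟩]
      rfl
    rw [Finset.prod_congr rfl fun a ha => hxf a (Finset.mem_range.1 ha),
        Finset.prod_congr rfl fun a ha => hyf a (Finset.mem_range.1 ha),
        Finset.prod_congr rfl fun a ha => hrf a (Finset.mem_range.1 ha),
        prod_X_eq, prod_X_eq, prod_X_eq, MvPolynomial.monomial_mul, one_mul,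
        MvPolynomial.monomial_mul, one_mul]
    have hstep1 : eexp n k l c I J H (perm0 c I.card J.card)
        = ∑ j ∈ Finset.range (c + (J.card + I.card)),
          Finsupp.single (wvar n k l c I J H j
            (if j < c then j else if j < c + J.card then j + I.card else j - J.card)) (1 : ℕ) := by
      rw [eexp, show c + (J.card + I.card) = c + I.card + J.card from by omega,
        ← Fin.sum_univ_eq_sum_range]
      exact Finset.sum_congr rfl fun i _ => by rw [perm0_apply]
    have e1 : (∑ j ∈ Finset.range c, Finsupp.single (wvar n k l c I J H j
          (if j < c then j else if j < c + J.card then j + I.card else j - J.card)) (1 : ℕ))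
        = ∑ j ∈ Finset.range c, Finsupp.single (wvar n k l c I J H j j) (1 : ℕ) := by
      refine Finset.sum_congr rfl fun j hj => ?_
      rw [Finset.mem_range] at hj
      rw [if_pos hj]
    have e2 : (∑ x ∈ Finset.range J.card, Finsupp.single (wvar n k l c I J H (c + x)
          (if c + x < c then c + x else if c + x < c + J.card then c + x + I.card
            else c + x - J.card)) (1 : ℕ))
        = ∑ x ∈ Finset.range J.card,
            Finsupp.single (wvar n k l c I J H (c + x) (c + I.card + x)) (1 : ℕ) := by
      refine Finset.sum_congr rfl fun x hx => ?_
      rw [Finset.mem_range] at hx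
      rw [if_neg (by omega), if_pos (by omega),
        show c + x + I.card = c + I.card + x from by ring]
    have e3 : (∑ x ∈ Finset.range I.card, Finsupp.single (wvar n k l c I J H (c + (J.card + x))
          (if c + (J.card + x) < c then c + (J.card + x)
            else if c + (J.card + x) < c + J.card then c + (J.card + x) + I.card
            else c + (J.card + x) - J.card)) (1 : ℕ))
        = ∑ x ∈ Finset.range I.card,
            Finsupp.single (wvar n k l c I J H (c + J.card + x) (c + x)) (1 : ℕ) := by
      refine Finset.sum_congr rfl fun x hx => ?_
      rw [Finset.mem_range] at hx
      rw [if_neg (by omega), if_neg (by omega),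
        show c + (J.card + x) - J.card = c + x from by omega,
        show c + (J.card + x) = c + J.card + x from by ring]
    rw [hstep1, Finset.sum_range_add, Finset.sum_range_add, ← add_assoc, e1, e2, e3]

end Pieri
end
end

section
/- Let n, k, ℓ be positive integers with 2(k+ℓ) < n, let 0 ≤ c ≤ k and let I, J be subsets of {1,…,ℓ} with |I| ≤ k − c. Then the determinant η_{(c,I,J)} is fixed by every element of U_n × U_k acting on P_{n,k,ℓ}; that is, η_{(c,I,J)} ∈ 𝔄_{n,k,ℓ}. -/
open MvPolynomial TensorProduct
open scoped Classical

noncomputable section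

namespace Pieri

/-! ### Auxiliary material for Statement 7 -/

/-- Extension of a matrix entry function to ℕ-indices. -/
def gE {d : ℕ} (g : Matrix (Fin d) (Fin d) ℂ) (p a : ℕ) : ℂ :=
  if h : p < d ∧ a < d then g ⟨p, h.1⟩ ⟨a, h.2⟩ else 0

theorem gE_eq_zero {d : ℕ} {g : Matrix (Fin d) (Fin d) ℂ} (hg : IsUU g) {p a : ℕ}
    (h : a < p) : gE g p a = 0 := by
  unfold gE
  split
  · exact hg.2 _ _ (by simpa using h)
  · rfl

theorem gE_diag {d : ℕ} {g : Matrix (Fin d) (Fin d) ℂ} (hg : IsUU g) {a : ℕ} (h : a < d) :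
    gE g a a = 1 := by
  unfold gE; rw [dif_pos ⟨h, h⟩]; exact hg.1 _

theorem sort_getD_mem (S : Finset ℕ) (i : ℕ) (hi : i < S.card) :
    (S.sort (· ≤ ·)).getD i 0 ∈ S := by
  have hl : i < (S.sort (· ≤ ·)).length := by simpa using hi
  rw [List.getD_eq_getElem _ _ hl]
  exact (Finset.mem_sort _).mp (List.getElem_mem hl)

theorem xP_eq (n k l : ℕ) {a b : ℕ} (ha : a < n) (hb : b < k) :
    xP n k l (a + 1) (b + 1) = X (Sum.inl (⟨a, ha⟩, ⟨b, hb⟩)) := by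
  rw [xP, dif_pos (by omega : 1 ≤ a+1 ∧ a+1 ≤ n ∧ 1 ≤ b+1 ∧ b+1 ≤ k)]; rfl

theorem yP_eq (n k l : ℕ) {a j : ℕ} (ha : a < n) (hj1 : 1 ≤ j) (hjl : j ≤ l) :
    yP n k l (a + 1) j = X (Sum.inr (Sum.inl (⟨a, ha⟩, ⟨j - 1, by omega⟩))) := by
  rw [yP, dif_pos (by omega : 1 ≤ a+1 ∧ a+1 ≤ n ∧ 1 ≤ j ∧ j ≤ l)]; rfl

theorem rP_eq (n k l : ℕ) {b j : ℕ} (hb : b < k) (hj1 : 1 ≤ j) (hjl : j ≤ l) :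
    rP n k l (b + 1) j = X (Sum.inr (Sum.inr (Sum.inl (⟨b, hb⟩, ⟨j - 1, by omega⟩)))) := by
  rw [rP, dif_pos (by omega : 1 ≤ b+1 ∧ b+1 ≤ k ∧ 1 ≤ j ∧ j ≤ l)]; rfl

theorem uAct_xP (n k l : ℕ) (g : Matrix (Fin n) (Fin n) ℂ) (h : Matrix (Fin k) (Fin k) ℂ)
    {a b : ℕ} (ha : a < n) (hb : b < k) :
    uAct n k l g h (xP n k l (a + 1) (b + 1)) =
      ∑ p ∈ Finset.range n, ∑ q ∈ Finset.range k,
        C (gE g p a * gE h q b) * xP n k l (p + 1) (q + 1) := by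
  rw [xP_eq n k l ha hb]
  have h1 : uAct n k l g h (X (Sum.inl (⟨a, ha⟩, ⟨b, hb⟩))) =
      ∑ p : Fin n, ∑ q : Fin k, C (g p ⟨a, ha⟩ * h q ⟨b, hb⟩) * X (Sum.inl (p, q)) := by
    simp [uAct]
  rw [h1, ← Fin.sum_univ_eq_sum_range (fun p => ∑ q ∈ Finset.range k,
    C (gE g p a * gE h q b) * xP n k l (p + 1) (q + 1)) n]
  refine Finset.sum_congr rfl fun p _ => ?_
  rw [← Fin.sum_univ_eq_sum_range (fun q =>
    C (gE g (p : ℕ) a * gE h q b) * xP n k l ((p : ℕ) + 1) (q + 1)) k]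
  refine Finset.sum_congr rfl fun q _ => ?_
  rw [xP_eq n k l p.isLt q.isLt]
  unfold gE
  rw [dif_pos ⟨p.isLt, ha⟩, dif_pos ⟨q.isLt, hb⟩]

theorem uAct_yP (n k l : ℕ) (g : Matrix (Fin n) (Fin n) ℂ) (h : Matrix (Fin k) (Fin k) ℂ)
    {a j : ℕ} (ha : a < n) (hj1 : 1 ≤ j) (hjl : j ≤ l) :
    uAct n k l g h (yP n k l (a + 1) j) =
      ∑ p ∈ Finset.range n, C (gE g p a) * yP n k l (p + 1) j := by
  rw [yP_eq n k l ha hj1 hjl]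
  have h1 : uAct n k l g h (X (Sum.inr (Sum.inl (⟨a, ha⟩, ⟨j - 1, by omega⟩)))) =
      ∑ p : Fin n, C (g p ⟨a, ha⟩) * X (Sum.inr (Sum.inl (p, ⟨j - 1, by omega⟩))) := by
    simp [uAct]
  rw [h1, ← Fin.sum_univ_eq_sum_range (fun p => C (gE g p a) * yP n k l (p + 1) j) n]
  refine Finset.sum_congr rfl fun p _ => ?_
  rw [yP_eq n k l p.isLt hj1 hjl]
  unfold gE
  rw [dif_pos ⟨p.isLt, ha⟩]

theorem uAct_rP (n k l : ℕ) (g : Matrix (Fin n) (Fin n) ℂ) (h : Matrix (Fin k) (Fin k) ℂ)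
    {b j : ℕ} (hb : b < k) (hj1 : 1 ≤ j) (hjl : j ≤ l) :
    uAct n k l g h (rP n k l (b + 1) j) =
      ∑ q ∈ Finset.range k, C (gE h q b) * rP n k l (q + 1) j := by
  rw [rP_eq n k l hb hj1 hjl]
  have h1 : uAct n k l g h (X (Sum.inr (Sum.inr (Sum.inl (⟨b, hb⟩, ⟨j - 1, by omega⟩))))) =
      ∑ q : Fin k, C (h q ⟨b, hb⟩) *
        X (Sum.inr (Sum.inr (Sum.inl (q, ⟨j - 1, by omega⟩)))) := by
    simp [uAct]
  rw [h1, ← Fin.sum_univ_eq_sum_range (fun q => C (gE h q b) * rP n k l (q + 1) j) k]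
  refine Finset.sum_congr rfl fun q _ => ?_
  rw [rP_eq n k l q.isLt hj1 hjl]
  unfold gE
  rw [dif_pos ⟨q.isLt, hb⟩]

/-- ℕ-indexed entries of the matrix defining `η_{(c,I,J)}`. -/
def etaEnt (n k l c : ℕ) (I J : Finset ℕ) (a b : ℕ) : PRing n k l :=
  if a < c + J.card then
    if b < c + I.card then xP n k l (a + 1) (b + 1)
    else yP n k l (a + 1) ((J.sort (· ≤ ·)).getD (b - (c + I.card)) 0)
  else
    if b < c + I.card then rP n k l (b + 1) ((I.sort (· ≤ ·)).getD (a - (c + J.card)) 0)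
    else 0

/-- ℕ-indexed entries of the row/column operation matrices. -/
def triEnt (n k l : ℕ) {d : ℕ} (cv : ℕ) (g : Matrix (Fin d) (Fin d) ℂ) (a p : ℕ) :
    PRing n k l :=
  if a < cv then (if p < cv then C (gE g p a) else 0)
  else (if p = a then 1 else 0)

theorem sum_range_trunc {M : Type*} [AddCommMonoid M] {m n : ℕ} (hmn : m ≤ n) (f : ℕ → M)
    (hf : ∀ i, m ≤ i → f i = 0) : ∑ i ∈ Finset.range n, f i = ∑ i ∈ Finset.range m, f i :=
  (Finset.sum_subset (Finset.range_subset_range.mpr hmn)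
    (fun x _ hnx => hf x (by simpa using hnx))).symm

theorem statement_7 (n k l : ℕ) (hn : 0 < n) (hk : 0 < k) (hl : 0 < l)
    (hst : 2 * (k + l) < n) (c : ℕ) (hc : c ≤ k) (I J : Finset ℕ)
    (hI : I ⊆ Finset.Icc 1 l) (hJ : J ⊆ Finset.Icc 1 l) (hu : I.card ≤ k - c) :
    eta n k l c I J ∈ invariants n k l := by
  intro g h hg hh
  have hv : J.card ≤ l := by
    have := Finset.card_le_card hJ
    rwa [Nat.card_Icc, Nat.add_sub_cancel] at this
  have hcu : c + I.card ≤ k := by omega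
  have hcvn : c + J.card < n := by omega
  set N : Matrix (Fin (c + I.card + J.card)) (Fin (c + I.card + J.card)) (PRing n k l) :=
    Matrix.of fun a b => etaEnt n k l c I J a.val b.val with hN
  have heta : eta n k l c I J = N.det := rfl
  set G : Matrix (Fin (c + I.card + J.card)) (Fin (c + I.card + J.card)) (PRing n k l) :=
    Matrix.of fun a p => triEnt n k l (c + J.card) g a.val p.val with hG
  set H : Matrix (Fin (c + I.card + J.card)) (Fin (c + I.card + J.card)) (PRing n k l) :=
    Matrix.of fun q b => triEnt n k l (c + I.card) h b.val q.val with hH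
  -- determinants of the triangular factors
  have hdetG : G.det = 1 := by
    rw [Matrix.det_of_lowerTriangular G (fun i j hij => ?_)]
    · refine Finset.prod_eq_one fun i _ => ?_
      rw [hG]
      simp only [Matrix.of_apply, triEnt]
      by_cases hi : (i : ℕ) < c + J.card
      · rw [if_pos hi, if_pos hi, gE_diag hg (by omega), map_one]
      · rw [if_neg hi]; simp
    · have hij' : (i : ℕ) < (j : ℕ) := hij
      rw [hG]
      simp only [Matrix.of_apply, triEnt]
      by_cases hi : (i : ℕ) < c + J.card
      · rw [if_pos hi]
        by_cases hj : (j : ℕ) < c + J.card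
        · rw [if_pos hj, gE_eq_zero hg hij', map_zero]
        · rw [if_neg hj]
      · rw [if_neg hi, if_neg (by omega : ¬ (j : ℕ) = (i : ℕ))]
  have hdetH : H.det = 1 := by
    rw [Matrix.det_of_upperTriangular (M := H) (fun i j hij => ?_)]
    · refine Finset.prod_eq_one fun i _ => ?_
      rw [hH]
      simp only [Matrix.of_apply, triEnt]
      by_cases hi : (i : ℕ) < c + I.card
      · rw [if_pos hi, if_pos hi, gE_diag hh (by omega), map_one]
      · rw [if_neg hi]; simp
    · have hij' : (j : ℕ) < (i : ℕ) := hij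
      rw [hH]
      simp only [Matrix.of_apply, triEnt]
      by_cases hj : (j : ℕ) < c + I.card
      · rw [if_pos hj]
        by_cases hi : (i : ℕ) < c + I.card
        · rw [if_pos hi, gE_eq_zero hh hij', map_zero]
        · rw [if_neg hi]
      · rw [if_neg hj, if_neg (by omega : ¬ (i : ℕ) = (j : ℕ))]
  -- the key matrix identity
  have hmap : N.map (uAct n k l g h) = G * N * H := by
    refine Matrix.ext fun a b => ?_
    have hR : (G * N * H) a b = ∑ p ∈ Finset.range (c + I.card + J.card),
        ∑ q ∈ Finset.range (c + I.card + J.card),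
          triEnt n k l (c + J.card) g a.val p * etaEnt n k l c I J p q *
            triEnt n k l (c + I.card) h b.val q := by
      rw [hG, hH, hN]
      simp only [Matrix.mul_apply, Matrix.of_apply, Finset.sum_mul]
      rw [Finset.sum_comm]
      rw [← Fin.sum_univ_eq_sum_range (fun p => ∑ q ∈ Finset.range (c + I.card + J.card),
        triEnt n k l (c + J.card) g a.val p * etaEnt n k l c I J p q *
          triEnt n k l (c + I.card) h b.val q) (c + I.card + J.card)]
      exact Finset.sum_congr rfl fun p _ => Fin.sum_univ_eq_sum_range
        (fun q => triEnt n k l (c + J.card) g a.val p.val * etaEnt n k l c I J p.val q *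
          triEnt n k l (c + I.card) h b.val q) _
    rw [Matrix.map_apply, hR, hN]
    simp only [Matrix.of_apply]
    by_cases haa : (a : ℕ) < c + J.card
    · by_cases hbb : (b : ℕ) < c + I.card
      · -- x-block
        rw [show etaEnt n k l c I J a.val b.val = xP n k l (a.val + 1) (b.val + 1) by
          rw [etaEnt, if_pos haa, if_pos hbb]]
        rw [uAct_xP n k l g h (by omega) (by omega)]
        rw [sum_range_trunc (m := c + J.card) (by omega)
          (fun p => ∑ q ∈ Finset.range (c + I.card + J.card),
            triEnt n k l (c + J.card) g (a : ℕ) p * etaEnt n k l c I J p q *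
              triEnt n k l (c + I.card) h (b : ℕ) q)
          (fun p hp => Finset.sum_eq_zero fun q _ => by
            simp only [triEnt]
            rw [if_pos haa, if_neg (by omega : ¬ p < c + J.card), zero_mul, zero_mul])]
        rw [sum_range_trunc (m := c + J.card) (by omega : c + J.card ≤ n)
          (fun p => ∑ q ∈ Finset.range k,
            C (gE g p (a : ℕ) * gE h q (b : ℕ)) * xP n k l (p + 1) (q + 1))
          (fun p hp => Finset.sum_eq_zero fun q _ => by
            rw [gE_eq_zero hg (by omega), zero_mul, map_zero, zero_mul])]
        refine Finset.sum_congr rfl fun p hp => ?_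
        simp only [Finset.mem_range] at hp
        rw [sum_range_trunc (m := c + I.card) (by omega)
          (fun q => triEnt n k l (c + J.card) g (a : ℕ) p * etaEnt n k l c I J p q *
            triEnt n k l (c + I.card) h (b : ℕ) q)
          (fun q hq => by
            simp only [triEnt]
            rw [if_pos hbb, if_neg (by omega : ¬ q < c + I.card), mul_zero])]
        rw [sum_range_trunc (m := c + I.card) (by omega : c + I.card ≤ k)
          (fun q => C (gE g p (a : ℕ) * gE h q (b : ℕ)) * xP n k l (p + 1) (q + 1))
          (fun q hq => by
            simp only [gE_eq_zero hh (show (b : ℕ) < q by omega), mul_zero, map_zero,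
              zero_mul])]
        refine Finset.sum_congr rfl fun q hq => ?_
        simp only [Finset.mem_range] at hq
        simp [triEnt, etaEnt, haa, hp, hbb, hq, map_mul]
        ring
      · -- y-block
        have hidx : (b : ℕ) - (c + I.card) < J.card := by omega
        have hjm : (J.sort (· ≤ ·)).getD ((b : ℕ) - (c + I.card)) 0 ∈ Finset.Icc 1 l :=
          hJ (sort_getD_mem J _ hidx)
        have hj1 := Finset.mem_Icc.mp hjm
        rw [show etaEnt n k l c I J a.val b.val =
            yP n k l (a.val + 1) ((J.sort (· ≤ ·)).getD ((b : ℕ) - (c + I.card)) 0) by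
          rw [etaEnt, if_pos haa, if_neg hbb]]
        rw [uAct_yP n k l g h (by omega) hj1.1 hj1.2]
        have e1 : ∀ p ∈ Finset.range (c + I.card + J.card),
            (∑ q ∈ Finset.range (c + I.card + J.card),
              triEnt n k l (c + J.card) g (a : ℕ) p * etaEnt n k l c I J p q *
                triEnt n k l (c + I.card) h (b : ℕ) q) =
            triEnt n k l (c + J.card) g (a : ℕ) p * etaEnt n k l c I J p (b : ℕ) := by
          intro p _
          have := Finset.sum_eq_single (M := PRing n k l) (f := fun q =>
              triEnt n k l (c + J.card) g (a : ℕ) p * etaEnt n k l c I J p q *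
                triEnt n k l (c + I.card) h (b : ℕ) q) (s := Finset.range (c + I.card + J.card))
            (b : ℕ)
            (fun q _ hq => by
              simp only [triEnt]
              rw [if_neg hbb, if_neg hq, mul_zero])
            (fun hb' => absurd (Finset.mem_range.mpr b.isLt) hb')
          rw [this]
          simp [triEnt, hbb]
        rw [Finset.sum_congr rfl e1]
        rw [sum_range_trunc (m := c + J.card) (by omega)
          (fun p => triEnt n k l (c + J.card) g (a : ℕ) p * etaEnt n k l c I J p (b : ℕ))
          (fun p hp => by
            simp only [triEnt]
            rw [if_pos haa, if_neg (by omega : ¬ p < c + J.card), zero_mul])]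
        rw [sum_range_trunc (m := c + J.card) (by omega : c + J.card ≤ n)
          (fun p => C (gE g p (a : ℕ)) *
            yP n k l (p + 1) ((J.sort (· ≤ ·)).getD ((b : ℕ) - (c + I.card)) 0))
          (fun p hp => by
            simp only [gE_eq_zero hg (show (a : ℕ) < p by omega), map_zero, zero_mul])]
        refine Finset.sum_congr rfl fun p hp => ?_
        simp only [Finset.mem_range] at hp
        simp [triEnt, etaEnt, haa, hp, hbb]
    · by_cases hbb : (b : ℕ) < c + I.card
      · -- r-block
        have hidx : (a : ℕ) - (c + J.card) < I.card := by omega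
        have him : (I.sort (· ≤ ·)).getD ((a : ℕ) - (c + J.card)) 0 ∈ Finset.Icc 1 l :=
          hI (sort_getD_mem I _ hidx)
        have hi1 := Finset.mem_Icc.mp him
        rw [show etaEnt n k l c I J a.val b.val =
            rP n k l (b.val + 1) ((I.sort (· ≤ ·)).getD ((a : ℕ) - (c + J.card)) 0) by
          rw [etaEnt, if_neg haa, if_pos hbb]]
        rw [uAct_rP n k l g h (by omega) hi1.1 hi1.2]
        have e1 : (∑ p ∈ Finset.range (c + I.card + J.card),
            ∑ q ∈ Finset.range (c + I.card + J.card),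
              triEnt n k l (c + J.card) g (a : ℕ) p * etaEnt n k l c I J p q *
                triEnt n k l (c + I.card) h (b : ℕ) q) =
            ∑ q ∈ Finset.range (c + I.card + J.card),
              triEnt n k l (c + J.card) g (a : ℕ) (a : ℕ) * etaEnt n k l c I J (a : ℕ) q *
                triEnt n k l (c + I.card) h (b : ℕ) q :=
          Finset.sum_eq_single (a : ℕ)
            (fun p _ hp => Finset.sum_eq_zero fun q _ => by
              simp only [triEnt]
              rw [if_neg haa, if_neg hp, zero_mul, zero_mul])
            (fun ha' => absurd (Finset.mem_range.mpr a.isLt) ha')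
        rw [e1]
        rw [sum_range_trunc (m := c + I.card) (by omega)
          (fun q => triEnt n k l (c + J.card) g (a : ℕ) (a : ℕ) * etaEnt n k l c I J (a : ℕ) q *
            triEnt n k l (c + I.card) h (b : ℕ) q)
          (fun q hq => by
            simp only [etaEnt]
            rw [if_neg haa, if_neg (by omega : ¬ q < c + I.card), mul_zero, zero_mul])]
        rw [sum_range_trunc (m := c + I.card) (by omega : c + I.card ≤ k)
          (fun q => C (gE h q (b : ℕ)) *
            rP n k l (q + 1) ((I.sort (· ≤ ·)).getD ((a : ℕ) - (c + J.card)) 0))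
          (fun q hq => by
            simp only [gE_eq_zero hh (show (b : ℕ) < q by omega), map_zero, zero_mul])]
        refine Finset.sum_congr rfl fun q hq => ?_
        simp only [Finset.mem_range] at hq
        simp [triEnt, etaEnt, haa, hq, hbb]
        ring
      · -- zero block
        rw [show etaEnt n k l c I J a.val b.val = 0 by
          rw [etaEnt, if_neg haa, if_neg hbb]]
        rw [map_zero]
        refine (Finset.sum_eq_zero fun p _ => Finset.sum_eq_zero fun q _ => ?_).symm
        by_cases hpa : p = (a : ℕ)
        · subst hpa
          by_cases hq : q < c + I.card
          · have : triEnt n k l (c + I.card) h (b : ℕ) q = 0 := by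
              simp only [triEnt]
              rw [if_neg hbb, if_neg (by omega : ¬ q = (b : ℕ))]
            rw [this, mul_zero]
          · have : etaEnt n k l c I J (a : ℕ) q = 0 := by
              simp only [etaEnt]
              rw [if_neg haa, if_neg hq]
            rw [this, mul_zero, zero_mul]
        · have : triEnt n k l (c + J.card) g (a : ℕ) p = 0 := by
            simp only [triEnt]
            rw [if_neg haa, if_neg hpa]
          rw [this, zero_mul, zero_mul]
  -- conclude
  calc uAct n k l g h (eta n k l c I J) = (N.map (uAct n k l g h)).det := by
        rw [heta, AlgHom.map_det]; rfl
    _ = (G * N * H).det := by rw [hmap]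
    _ = G.det * N.det * H.det := by rw [Matrix.det_mul, Matrix.det_mul]
    _ = eta n k l c I J := by rw [hdetG, hdetH, heta, one_mul, mul_one]

end Pieri
end
end
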